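/- arXiv:2210.14060 — 3 statements merged into one kernel-verified Lean document; each statement's English description precedes it below -/
import Mathlib

section
/- The Jacobian of a finite connected graph G is a finite abelian group whose order equals the number of spanning trees of G. -/
/-- A finite (multi)graph: finite vertex and edge sets, each edge with a
source and target endpoint (orientation is irrelevant; loops allowed). -/
structure FinGraph where
  V : Type
  E : Type
  [fintypeV : Fintype V]
  [fintypeE : Fintype E]
  [decEqV : DecidableEq V]
  s : E → V
  t : E → V

attribute [instance] FinGraph.fintypeV FinGraph.fintypeE FinGraph.decEqV

namespace FinGraph

variable (G : FinGraph)

/-- Two vertices are adjacent if some edge joins them. -/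
def Adj (u v : G.V) : Prop :=
  ∃ e : G.E, (G.s e = u ∧ G.t e = v) ∨ (G.s e = v ∧ G.t e = u)

/-- Vertices in the same connected component. -/
def Reach (u v : G.V) : Prop := Relation.ReflTransGen G.Adj u v

/-- The number of connected components. -/
noncomputable def numComponents : ℕ := Nat.card (Quot G.Reach)

/-- The genus (first Betti number) `e - v + f` as an integer. -/
noncomputable def genus : ℤ :=
  (Fintype.card G.E : ℤ) - (Fintype.card G.V : ℤ) + (G.numComponents : ℤ)

/-- A graph is connected if it is nonempty and any two vertices are joined by a path. -/
def Connected : Prop := Nonempty G.V ∧ ∀ u v : G.V, G.Reach u v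

/-- The valence of a vertex (loops counted twice). -/
def val (v : G.V) : ℕ :=
  (Finset.univ.filter fun e => G.s e = v).card +
  (Finset.univ.filter fun e => G.t e = v).card

/-- The canonical divisor `K(v) = val(v) - 2`. -/
def canonical : G.V → ℤ := fun v => (G.val v : ℤ) - 2

/-- The degree of a divisor: the total number of chips. -/
def deg (D : G.V → ℤ) : ℤ := ∑ v, D v

/-- A divisor is effective if it is nonnegative everywhere. -/
def Effective (D : G.V → ℤ) : Prop := ∀ v, 0 ≤ D v

/-- The principal divisor (Laplacian) associated to `f : V → ℤ`. -/
def divOf (f : G.V → ℤ) : G.V → ℤ := fun v =>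
  ∑ e : G.E,
    ((if G.s e = v then f (G.t e) - f (G.s e) else 0) +
     (if G.t e = v then f (G.s e) - f (G.t e) else 0))

/-- A divisor is principal if it is the Laplacian of some integer function. -/
def Principal (D : G.V → ℤ) : Prop := ∃ f : G.V → ℤ, D = G.divOf f

/-- Linear equivalence of divisors. -/
def LinEquiv (D D' : G.V → ℤ) : Prop := G.Principal (D - D')

/-- A divisor is winnable (has nonempty linear system) if it is linearly
equivalent to an effective divisor. -/
def Winnable (D : G.V → ℤ) : Prop := ∃ E, G.Effective E ∧ G.LinEquiv D E

/-- `D` has rank at least `r` : removing any `r` chips leaves a winnable divisor. -/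
def RankGE (D : G.V → ℤ) (r : ℕ) : Prop :=
  ∀ E : G.V → ℤ, G.Effective E → G.deg E = (r : ℤ) → G.Winnable (D - E)

/-- The Baker–Norine rank of a divisor. -/
noncomputable def rank (D : G.V → ℤ) : ℤ :=
  sSup (insert (-1) {r : ℤ | ∃ n : ℕ, r = (n : ℤ) ∧ G.RankGE D n})

/-- Degree as an additive group homomorphism. -/
noncomputable def degHom : (G.V → ℤ) →+ ℤ where
  toFun := G.deg
  map_zero' := by simp [deg]
  map_add' := fun a b => by simp [deg, Finset.sum_add_distrib]

/-- The Laplacian as an additive group homomorphism. -/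
noncomputable def lapHom : (G.V → ℤ) →+ (G.V → ℤ) where
  toFun := G.divOf
  map_zero' := by funext v; simp [divOf]
  map_add' := fun a b => by
    funext v
    simp only [divOf, Pi.add_apply, ← Finset.sum_add_distrib]
    exact Finset.sum_congr rfl fun e _ => by split_ifs <;> ring

/-- The Jacobian: degree-zero divisors modulo principal divisors. -/
noncomputable def Jac :=
  G.degHom.ker ⧸ (G.lapHom.range.addSubgroupOf G.degHom.ker)

noncomputable instance : AddCommGroup G.Jac :=
  QuotientAddGroup.Quotient.addCommGroup _

/-- Reachability using only edges from the set `S`. -/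
def ReachIn (S : Finset G.E) (u v : G.V) : Prop :=
  Relation.ReflTransGen
    (fun a b => ∃ e ∈ S, (G.s e = a ∧ G.t e = b) ∨ (G.s e = b ∧ G.t e = a)) u v

/-- Reachability avoiding the edges in `S`. -/
def ReachAvoid (S : Finset G.E) (u v : G.V) : Prop :=
  Relation.ReflTransGen
    (fun a b => ∃ e, e ∉ S ∧ ((G.s e = a ∧ G.t e = b) ∨ (G.s e = b ∧ G.t e = a))) u v

/-- A spanning tree: a set of edges connecting all vertices, with one fewer
edge than there are vertices. -/
def IsSpanningTree (T : Finset G.E) : Prop :=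
  (∀ u v : G.V, G.ReachIn T u v) ∧ T.card + 1 = Fintype.card G.V

end FinGraph

/-- A free double cover of finite graphs: a two-to-one local isomorphism
whose deck involution acts freely on vertices and edges. -/
structure FreeDoubleCover (Gt G : FinGraph) where
  vMap : Gt.V → G.V
  eMap : Gt.E → G.E
  invV : Gt.V → Gt.V
  invE : Gt.E → Gt.E
  invV_invV : ∀ v, invV (invV v) = v
  invE_invE : ∀ e, invE (invE e) = e
  invV_ne : ∀ v, invV v ≠ v
  invE_ne : ∀ e, invE e ≠ e
  vMap_invV : ∀ v, vMap (invV v) = vMap v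
  eMap_invE : ∀ e, eMap (invE e) = eMap e
  s_comm : ∀ e, vMap (Gt.s e) = G.s (eMap e)
  t_comm : ∀ e, vMap (Gt.t e) = G.t (eMap e)
  s_invE : ∀ e, Gt.s (invE e) = invV (Gt.s e)
  t_invE : ∀ e, Gt.t (invE e) = invV (Gt.t e)
  fiberV : ∀ a b : Gt.V, vMap a = vMap b → b = a ∨ b = invV a
  fiberE : ∀ a b : Gt.E, eMap a = eMap b → b = a ∨ b = invE a
  vMap_surj : Function.Surjective vMap
  eMap_surj : Function.Surjective eMap

open Matrix

lemma index_range_toLin' {ι : Type} [Fintype ι] [DecidableEq ι] (A : Matrix ι ι ℤ)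
    (hA : A.det ≠ 0) :
    (LinearMap.range (Matrix.toLin' A)).toAddSubgroup.index = A.det.natAbs := by
  classical
  set f := Matrix.toLin' A with hf
  have hinj : Function.Injective f := by
    rw [← LinearMap.ker_eq_bot]
    by_contra h
    obtain ⟨v, hv, hv0⟩ := (Submodule.ne_bot_iff _).mp h
    refine hA (Matrix.exists_mulVec_eq_zero_iff.mp ⟨v, hv0, ?_⟩)
    simpa [hf, Matrix.toLin'_apply] using hv
  set N := LinearMap.range f with hN
  obtain ⟨m, snf⟩ := N.smithNormalForm (Pi.basisFun ℤ ι)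
  have hm : m = Fintype.card ι := by
    have hNequiv : N ≃ₗ[ℤ] (ι → ℤ) := (LinearEquiv.ofInjective f hinj).symm
    have h1 : Module.finrank ℤ N = m := Module.finrank_eq_card_basis snf.bN |>.trans (by simp)
    have h2 : Module.finrank ℤ N = Fintype.card ι := by
      rw [hNequiv.finrank_eq]; simp
    omega
  let eidx : Fin m ≃ ι := Equiv.ofBijective snf.f
    ((Fintype.bijective_iff_injective_and_card snf.f).mpr ⟨snf.f.injective, by simp [hm]⟩)
  have heidx : ∀ k, eidx k = snf.f k := fun k => rfl
  -- determinant comparison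
  have hdet : A.det.natAbs = (∏ k : Fin m, snf.a k).natAbs := by
    set bM := snf.bM with hbM
    set bN' : Module.Basis ι ℤ N := snf.bN.reindex eidx with hbN'
    set gl : (ι → ℤ) ≃ₗ[ℤ] N := bM.equiv bN' (Equiv.refl ι) with hgl
    set g0 : (ι → ℤ) →ₗ[ℤ] (ι → ℤ) := N.subtype ∘ₗ (gl : (ι → ℤ) →ₗ[ℤ] N) with hg0def
    set au := (LinearEquiv.ofInjective f hinj).trans gl.symm with hau
    have hfactor : f = g0 ∘ₗ au.toLinearMap := by
      apply LinearMap.ext; intro x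
      show f x = ((gl (gl.symm (LinearEquiv.ofInjective f hinj x))) : ι → ℤ)
      rw [gl.apply_symm_apply, LinearEquiv.ofInjective_apply]
    have hdf : LinearMap.det f = LinearMap.det g0 * LinearMap.det au.toLinearMap := by
      rw [hfactor, LinearMap.det_comp]
    have hg0 : LinearMap.det g0 = ∏ i : ι, snf.a (eidx.symm i) := by
      rw [← LinearMap.det_toMatrix bM]
      have hmat : LinearMap.toMatrix bM bM g0 = Matrix.diagonal (fun i => snf.a (eidx.symm i)) := by
        ext i j
        have h1 : g0 (bM j) = ((snf.bN (eidx.symm j) : ι → ℤ)) := by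
          show ((gl (bM j) : ι → ℤ)) = _
          rw [hgl, Module.Basis.equiv_apply, hbN', Module.Basis.reindex_apply, Equiv.refl_apply]
        have h2 : g0 (bM j) = snf.a (eidx.symm j) • bM j := by
          rw [h1, snf.snf (eidx.symm j), ← heidx, eidx.apply_symm_apply, hbM]
        rw [LinearMap.toMatrix_apply, h2, _root_.map_smul, Module.Basis.repr_self]
        simp only [Finsupp.coe_smul, Pi.smul_apply, Finsupp.single_apply, smul_eq_mul,
          Matrix.diagonal_apply]
        by_cases h : j = i
        · subst h; simp
        · simp [h, Ne.symm h]
      rw [hmat, Matrix.det_diagonal]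
    have hau' : IsUnit (LinearMap.det au.toLinearMap) := au.isUnit_det'
    have hA' : A.det = LinearMap.det f := (LinearMap.det_toLin' A).symm
    rw [hA', hdf]
    rcases Int.isUnit_iff.mp hau' with h | h <;>
      rw [h] <;> simp [hg0, ← Equiv.prod_comp eidx.symm snf.a]
  have hnat : (∏ k : Fin m, snf.a k).natAbs = ∏ k : Fin m, (snf.a k).natAbs := by
    exact map_prod Int.natAbsHom snf.a Finset.univ
  have hzero : Fintype.card ι - m = 0 := by omega
  rw [hdet, hnat, snf.toAddSubgroup_index_eq_pow_mul_prod, hzero, pow_zero, one_mul]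
  congr 1
  ext i
  simp [Ideal.span_singleton_toAddSubgroup_eq_zmultiples, Int.index_zmultiples]
namespace JacAux
open Matrix
variable (G : FinGraph) (q : G.V)

abbrev Vne := {v : G.V // v ≠ q}

noncomputable def extq (x : Vne G q → ℤ) : G.V → ℤ := fun v => if h : v = q then 0 else x ⟨v, h⟩

noncomputable def Nmat : Matrix (Vne G q) G.E ℤ := fun v e =>
  (if G.s e = v.1 then 1 else 0) - (if G.t e = v.1 then 1 else 0)

noncomputable def Lmat : Matrix (Vne G q) (Vne G q) ℤ := Nmat G q * (Nmat G q)ᵀ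

lemma sum_indicator (y : Vne G q → ℤ) (w : G.V) :
    (∑ u : Vne G q, (if w = u.1 then 1 else 0) * y u) = extq G q y w := by
  rw [extq]
  by_cases h : w = q
  · rw [dif_pos h]
    apply Finset.sum_eq_zero
    intro u _
    rw [if_neg, zero_mul]
    exact fun hq => u.2 (h ▸ hq.symm)
  · rw [dif_neg h]
    rw [Fintype.sum_eq_single (⟨w, h⟩ : Vne G q)]
    · simp
    · intro u hu
      rw [if_neg, zero_mul]
      intro hw; exact hu (Subtype.ext hw.symm)

lemma mulVec_Nt (x : Vne G q → ℤ) (e : G.E) :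
    ((Nmat G q)ᵀ.mulVec x) e = extq G q x (G.s e) - extq G q x (G.t e) := by
  simp only [Matrix.mulVec, dotProduct, Matrix.transpose_apply, Nmat]
  rw [← sum_indicator G q x (G.s e), ← sum_indicator G q x (G.t e), ← Finset.sum_sub_distrib]
  congr 1; ext u; ring

lemma mulVec_L (x : Vne G q → ℤ) (v : Vne G q) :
    ((Lmat G q).mulVec x) v = - G.divOf (extq G q x) v.1 := by
  rw [Lmat, ← Matrix.mulVec_mulVec]
  have h1 : ((Nmat G q)ᵀ.mulVec x) = fun e => extq G q x (G.s e) - extq G q x (G.t e) :=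
    funext (mulVec_Nt G q x)
  rw [h1]
  simp only [Matrix.mulVec, dotProduct, Nmat, FinGraph.divOf]
  rw [← Finset.sum_neg_distrib]
  refine Finset.sum_congr rfl fun e _ => ?_
  split_ifs <;> ring

lemma deg_divOf (f : G.V → ℤ) : G.deg (G.divOf f) = 0 := by
  simp only [FinGraph.deg, FinGraph.divOf]
  rw [Finset.sum_comm]
  apply Finset.sum_eq_zero
  intro e _
  rw [Finset.sum_add_distrib]
  simp [Finset.sum_ite_eq]

lemma divOf_add_const (f : G.V → ℤ) (c : ℤ) :
    G.divOf (fun v => f v + c) = G.divOf f := by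
  funext v
  simp only [FinGraph.divOf]
  apply Finset.sum_congr rfl
  intro e _
  split_ifs <;> ring

noncomputable def resHom : (G.V → ℤ) →+ (Vne G q → ℤ) :=
  AddMonoidHom.mk' (fun D v => D v.1) (by intros; rfl)

noncomputable def Rsub : AddSubgroup (Vne G q → ℤ) :=
  (LinearMap.range (Matrix.toLin' (Lmat G q))).toAddSubgroup

noncomputable def ψ : G.degHom.ker →+ (Vne G q → ℤ) ⧸ Rsub G q :=
  (QuotientAddGroup.mk' (Rsub G q)).comp ((resHom G q).comp G.degHom.ker.subtype)

lemma ψ_apply (D : G.V → ℤ) (hD : D ∈ G.degHom.ker) :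
    ψ G q ⟨D, hD⟩ = QuotientAddGroup.mk' (Rsub G q) (fun u => D u.1) := rfl

lemma sum_split (D : G.V → ℤ) :
    ∑ v, D v = D q + ∑ u : Vne G q, D u.1 := by
  rw [← Finset.sum_erase_add Finset.univ D (Finset.mem_univ q), add_comm]
  congr 1
  rw [Finset.sum_subtype (p := fun v => v ≠ q)]
  intro v
  simp [Finset.mem_erase]

lemma eq_of_deg_eq_off (D₁ D₂ : G.V → ℤ) (h1 : G.deg D₁ = 0) (h2 : G.deg D₂ = 0)
    (h : ∀ u : Vne G q, D₁ u.1 = D₂ u.1) : D₁ = D₂ := by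
  funext v
  by_cases hv : v = q
  · subst hv
    have e1 := sum_split G v D₁
    have e2 := sum_split G v D₂
    rw [FinGraph.deg] at h1 h2
    rw [h1] at e1; rw [h2] at e2
    have : ∑ u : Vne G v, D₁ u.1 = ∑ u : Vne G v, D₂ u.1 :=
      Finset.sum_congr rfl fun u _ => h u
    omega
  · exact h ⟨v, hv⟩

lemma ψ_surjective : Function.Surjective (ψ G q) := by
  intro c
  obtain ⟨x, rfl⟩ := QuotientAddGroup.mk'_surjective (Rsub G q) c
  refine ⟨⟨fun v => if h : v = q then -∑ u : Vne G q, x u else x ⟨v, h⟩, ?_⟩, ?_⟩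
  · rw [AddMonoidHom.mem_ker]
    show G.deg _ = 0
    rw [FinGraph.deg, sum_split G q]
    rw [dif_pos rfl]
    have : ∀ u : Vne G q, (if h : u.1 = q then -∑ u : Vne G q, x u else x ⟨u.1, h⟩) = x u := by
      intro u; rw [dif_neg u.2]
    rw [Finset.sum_congr rfl (fun u _ => this u)]
    ring
  · rw [ψ_apply]
    apply congrArg
    funext u
    rw [dif_neg u.2]

lemma ψ_ker : (ψ G q).ker = G.lapHom.range.addSubgroupOf G.degHom.ker := by
  ext ⟨D, hD⟩
  rw [AddMonoidHom.mem_ker, AddSubgroup.mem_addSubgroupOf, ψ_apply]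
  have hDdeg : G.deg D = 0 := hD
  constructor
  · intro h
    have hm := (QuotientAddGroup.eq_zero_iff _).mp h
    rw [Rsub, Submodule.mem_toAddSubgroup, LinearMap.mem_range] at hm
    obtain ⟨x, hx⟩ := hm
    refine ⟨-(extq G q x), ?_⟩
    show G.divOf _ = D
    have hneg : G.divOf (-(extq G q x)) = -G.divOf (extq G q x) := map_neg G.lapHom _
    rw [hneg]
    apply eq_of_deg_eq_off G q
    · have : G.deg (-G.divOf (extq G q x)) = -G.deg (G.divOf (extq G q x)) := by
        simp [FinGraph.deg]
      rw [this, deg_divOf]; ring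
    · exact hDdeg
    · intro u
      have h2 := congrFun hx u
      rw [Matrix.toLin'_apply, mulVec_L] at h2
      exact h2
  · rintro ⟨f, hf⟩
    have hf' : G.divOf f = D := hf
    apply (QuotientAddGroup.eq_zero_iff _).mpr
    rw [Rsub, Submodule.mem_toAddSubgroup, LinearMap.mem_range]
    set f' : G.V → ℤ := fun v => f v + (- f q) with hf'def
    have hd : G.divOf f' = D := by rw [hf'def, divOf_add_const, hf']
    have hq0 : f' q = 0 := by simp [hf'def]
    have hext : extq G q (fun u => f' u.1) = f' := by
      funext v
      rw [extq]
      by_cases h : v = q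
      · rw [dif_pos h, h, hq0]
      · rw [dif_neg h]
    refine ⟨-(fun u : Vne G q => f' u.1), ?_⟩
    rw [Matrix.toLin'_apply, Matrix.mulVec_neg]
    funext u
    show -((Lmat G q).mulVec _) u = D u.1
    rw [mulVec_L, hext, hd]
    ring

noncomputable def jacEquiv : G.Jac ≃+ (Vne G q → ℤ) ⧸ Rsub G q :=
  (QuotientAddGroup.quotientAddEquivOfEq (ψ_ker G q).symm).trans
    (QuotientAddGroup.quotientKerEquivOfSurjective (ψ G q) (ψ_surjective G q))

end JacAux
namespace JacAux
open Matrix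
variable (G : FinGraph) (q : G.V)

lemma reachIn_symm (T : Finset G.E) : Symmetric (G.ReachIn T) := by
  refine fun a b h => (@Relation.ReflTransGen.symmetric _
    (fun a b => ∃ e ∈ T, (G.s e = a ∧ G.t e = b) ∨ (G.s e = b ∧ G.t e = a)) ⟨?_⟩).symm a b h
  rintro a b ⟨e, he, h | h⟩
  · exact ⟨e, he, Or.inr ⟨h.1, h.2⟩⟩
  · exact ⟨e, he, Or.inl ⟨h.1, h.2⟩⟩

lemma det_Lmat_ne_zero (hG : G.Connected) : (Lmat G q).det ≠ 0 := by
  intro h0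
  obtain ⟨x, hx0, hx⟩ := Matrix.exists_mulVec_eq_zero_iff.mpr h0
  set y := (Nmat G q)ᵀ.mulVec x with hy
  have hyy : dotProduct y y = 0 := by
    have h1 : dotProduct x ((Lmat G q).mulVec x) = dotProduct y y := by
      rw [Lmat, ← Matrix.mulVec_mulVec, Matrix.dotProduct_mulVec, ← Matrix.mulVec_transpose]
    rw [hx] at h1
    simp only [dotProduct_zero] at h1
    exact h1.symm
  have hy0 : y = 0 := dotProduct_self_eq_zero.mp hyy
  have hedge : ∀ e : G.E, extq G q x (G.s e) = extq G q x (G.t e) := by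
    intro e
    have := congrFun hy0 e
    rw [hy, mulVec_Nt] at this
    simp only [Pi.zero_apply] at this
    omega
  have hreach : ∀ v : G.V, G.Reach q v → extq G q x v = 0 := by
    intro v hv
    induction hv with
    | refl => simp [extq]
    | tail _ hadj ih =>
      obtain ⟨e, h | h⟩ := hadj
      · rw [← h.2, ← hedge e, h.1, ih]
      · rw [← h.1, hedge e, h.2, ih]
  apply hx0
  funext u
  have := hreach u.1 (hG.2 q u.1)
  rw [extq, dif_neg u.2] at this
  simpa using this

end JacAux
namespace JacAux
open Matrix

section CB
variable {ι κ : Type} [Fintype ι] [Fintype κ] [DecidableEq ι] [DecidableEq κ]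

lemma det_mul_transpose_expand (N : Matrix ι κ ℤ) :
    (N * Nᵀ).det = ∑ r : ι → κ, (∏ i, N i (r i)) * (N.submatrix id r).det := by
  have h1 : (N * Nᵀ) = Matrix.of (fun i => ∑ j : κ, (fun k => N i j * N k j)) := by
    ext i k
    simp [Matrix.mul_apply, Matrix.transpose_apply]
  rw [h1]
  have h2 := (Matrix.detRowAlternating (R := ℤ) (n := ι)).toMultilinearMap.map_sum
    (g := fun (i : ι) (j : κ) => fun k => N i j * N k j)
  have h3 : (Matrix.detRowAlternating (R := ℤ) (n := ι)).toMultilinearMap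
      (fun i => ∑ j : κ, fun k => N i j * N k j) =
      (Matrix.of (fun i => ∑ j : κ, fun k => N i j * N k j)).det := rfl
  rw [h3] at h2
  rw [h2]
  apply Finset.sum_congr rfl
  intro r _
  have h4 : (Matrix.detRowAlternating (R := ℤ) (n := ι)).toMultilinearMap
      (fun i => fun k => N i (r i) * N k (r i)) =
      (Matrix.of fun i k => N i (r i) * N k (r i)).det := rfl
  rw [h4]
  have h5 : (Matrix.of fun i k => N i (r i) * N k (r i)) =
      Matrix.of (fun i k => (fun j => N j (r j)) i * ((N.submatrix id r)ᵀ) i k) := by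
    ext i k
    simp [Matrix.submatrix_apply, Matrix.transpose_apply]
  rw [h5, Matrix.det_mul_column, Matrix.det_transpose]

lemma det_submatrix_not_injective (N : Matrix ι κ ℤ) (r : ι → κ)
    (hr : ¬ Function.Injective r) : (N.submatrix id r).det = 0 := by
  obtain ⟨a, b, hab, hne⟩ := Function.not_injective_iff.mp hr
  exact Matrix.det_zero_of_column_eq hne (fun k => by simp [Matrix.submatrix_apply, hab])

noncomputable def colSel (S : Finset κ) (hS : S.card = Fintype.card ι) : ι ≃ S :=
  (Fintype.equivFin ι).trans (S.equivFinOfCardEq (by rw [hS])).symm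

noncomputable def detS (N : Matrix ι κ ℤ) (S : Finset κ) : ℤ :=
  if hS : S.card = Fintype.card ι then
    (N.submatrix id (fun i => ((colSel (ι := ι) S hS) i).1)).det else 0

lemma cauchyBinet (N : Matrix ι κ ℤ) :
    (N * Nᵀ).det = ∑ S ∈ Finset.univ.powersetCard (Fintype.card ι), (detS N S)^2 := by
  classical
  rw [det_mul_transpose_expand]
  rw [← Finset.sum_filter_add_sum_filter_not Finset.univ
    (fun r : ι → κ => Function.Injective r)
    (fun r => (∏ i, N i (r i)) * (N.submatrix id r).det)]
  have hz : ∑ r ∈ Finset.univ.filter (fun r : ι → κ => ¬ Function.Injective r),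
      (∏ i, N i (r i)) * (N.submatrix id r).det = 0 := by
    apply Finset.sum_eq_zero
    intro r hr
    rw [det_submatrix_not_injective N r (Finset.mem_filter.mp hr).2, mul_zero]
  rw [hz, add_zero]
  rw [← Finset.sum_fiberwise_of_maps_to (g := fun r : ι → κ => Finset.image r Finset.univ)
    (t := Finset.univ.powersetCard (Fintype.card ι)) ?hmaps]
  case hmaps =>
    intro r hr
    rw [Finset.mem_powersetCard]
    exact ⟨Finset.subset_univ _,
      by rw [Finset.card_image_of_injective _ (Finset.mem_filter.mp hr).2, Finset.card_univ]⟩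
  apply Finset.sum_congr rfl
  intro S hS
  have hScard : S.card = Fintype.card ι := (Finset.mem_powersetCard.mp hS).2
  set c : ι ≃ S := colSel S hScard with hc
  have hcinj : Function.Injective (fun i => (c i).1) := fun a b hab =>
    c.injective (Subtype.ext hab)
  have himAny : ∀ (f : ι → κ), Function.Injective f → (∀ a, f a ∈ S) →
      Finset.image f Finset.univ = S := by
    intro f hfinj hfmem
    apply Finset.eq_of_subset_of_card_le
    · intro x hx
      obtain ⟨i, _, rfl⟩ := Finset.mem_image.mp hx
      exact hfmem i
    · rw [Finset.card_image_of_injective _ hfinj, Finset.card_univ, hScard]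
  have hsurj : ∀ r : ι → κ, Function.Injective r → Finset.image r Finset.univ = S →
      ∃ σ : Equiv.Perm ι, (fun i => (c (σ i)).1) = r := by
    intro r hrinj hrim
    have hmem : ∀ a, r a ∈ S := fun a => by
      rw [← hrim]; exact Finset.mem_image_of_mem r (Finset.mem_univ a)
    have hginj : Function.Injective (fun a => c.symm ⟨r a, hmem a⟩) := by
      intro a b hab
      apply hrinj
      have h2 := c.symm.injective hab
      exact congrArg Subtype.val h2
    refine ⟨Equiv.ofBijective _ (Finite.injective_iff_bijective.mp hginj), ?_⟩
    funext a
    show ((c (c.symm ⟨r a, hmem a⟩)).1) = r a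
    rw [c.apply_symm_apply]
  have hFinj : Function.Injective (fun σ : Equiv.Perm ι => (fun i => (c (σ i)).1)) := by
    intro σ τ hστ
    ext a
    exact c.injective (Subtype.ext (congrFun hστ a))
  have hset : (Finset.univ.filter fun r : ι → κ => Function.Injective r).filter
        (fun r => Finset.image r Finset.univ = S)
      = Finset.image (fun σ : Equiv.Perm ι => (fun i => (c (σ i)).1)) Finset.univ := by
    ext r
    simp only [Finset.mem_filter, Finset.mem_univ, true_and, Finset.mem_image]
    constructor
    · rintro ⟨hrinj, hrim⟩
      obtain ⟨σ, hσ⟩ := hsurj r hrinj hrim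
      exact ⟨σ, hσ⟩
    · rintro ⟨σ, rfl⟩
      have hinj2 : Function.Injective (fun i => (c (σ i)).1) :=
        fun a b hab => σ.injective (c.injective (Subtype.ext hab))
      exact ⟨hinj2, himAny _ hinj2 (fun a => (c (σ a)).2)⟩
  rw [hset, Finset.sum_image (fun x _ y _ h => hFinj h)]
  set D := (N.submatrix id (fun i => (c i).1)).det with hD
  have hperm : ∀ σ : Equiv.Perm ι, (N.submatrix id (fun i => (c (σ i)).1)).det
      = (Equiv.Perm.sign σ : ℤ) * D := by
    intro σ
    have heq : N.submatrix id (fun i => (c (σ i)).1)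
        = (N.submatrix id (fun i => (c i).1)).submatrix id σ := rfl
    rw [heq, Matrix.det_permute', hD]
    norm_cast
  have hstep : ∑ σ : Equiv.Perm ι, (∏ i, N i ((c (σ i)).1))
        * (N.submatrix id (fun i => (c (σ i)).1)).det
      = (∑ σ : Equiv.Perm ι, (Equiv.Perm.sign σ : ℤ) * ∏ i, N i ((c (σ i)).1)) * D := by
    rw [Finset.sum_mul]
    apply Finset.sum_congr rfl
    intro σ _
    rw [hperm σ]
    ring
  rw [hstep]
  have hDt : (∑ σ : Equiv.Perm ι, (Equiv.Perm.sign σ : ℤ) * ∏ i, N i ((c (σ i)).1)) = D := by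
    rw [hD, ← Matrix.det_transpose (N.submatrix id (fun i => (c i).1)), Matrix.det_apply']
    apply Finset.sum_congr rfl
    intro σ _
    congr 1
  rw [hDt, detS, dif_pos hScard]
  have : (N.submatrix id fun i => ((colSel S hScard) i).1) = N.submatrix id (fun i => (c i).1) := rfl
  rw [this, ← hD]
  ring

end CB
end JacAux
namespace JacAux
open Matrix
open scoped Classical
variable (G : FinGraph) (q : G.V)

lemma card_V : Fintype.card G.V = Fintype.card (Vne G q) + 1 := by
  have h1 : Fintype.card {v : G.V // ¬ v = q} = Fintype.card G.V - Fintype.card {v : G.V // v = q} :=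
    Fintype.card_subtype_compl _
  have h2 : Fintype.card {v : G.V // v = q} = 1 := Fintype.card_subtype_eq q
  have h3 : 0 < Fintype.card G.V := Fintype.card_pos_iff.mpr ⟨q⟩
  have h4 : Fintype.card (Vne G q) = Fintype.card {v : G.V // ¬ v = q} := by
    apply Fintype.card_congr
    exact Equiv.subtypeEquivRight (by intro v; tauto)
  omega

lemma reach_all_of_reach_q (S : Finset G.E) (h : ∀ v, G.ReachIn S q v) :
    ∀ u v, G.ReachIn S u v := fun u v =>
  Relation.ReflTransGen.trans (reachIn_symm G S (h u)) (h v)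

lemma detS_not_spanning (S : Finset G.E) (hS : S.card = Fintype.card (Vne G q))
    (hns : ¬ ∀ v, G.ReachIn S q v) : detS (Nmat G q) S = 0 := by
  push_neg at hns
  obtain ⟨w, hw⟩ := hns
  have hwq : w ≠ q := fun h => hw (h ▸ Relation.ReflTransGen.refl)
  rw [detS, dif_pos hS]
  apply Matrix.exists_vecMul_eq_zero_iff.mp
  set cfull : G.V → ℤ := fun v => if G.ReachIn S w v then 1 else 0 with hcfull
  set c : Vne G q → ℤ := fun u => cfull u.1 with hc
  have hq0 : cfull q = 0 := by
    rw [hcfull]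
    simp only [if_neg (fun h => hw (reachIn_symm G S h))]
  refine ⟨c, ?_, ?_⟩
  · intro h0
    have h1 : c ⟨w, hwq⟩ = 0 := by rw [h0]; rfl
    have h2 : c ⟨w, hwq⟩ = 1 := by
      show (if G.ReachIn S w w then (1:ℤ) else 0) = 1
      have hww : G.ReachIn S w w := Relation.ReflTransGen.refl
      simp [hww]
    rw [h2] at h1
    exact one_ne_zero h1
  · funext j
    set e := ((colSel S hS j : {x // x ∈ S}) : G.E) with he
    have heS : e ∈ S := (colSel S hS j).2
    show ∑ u : Vne G q, c u * Nmat G q u e = 0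
    have hsum : ∑ u : Vne G q, c u * Nmat G q u e = cfull (G.s e) - cfull (G.t e) := by
      have h1 : ∀ u : Vne G q, c u * Nmat G q u e
          = (if G.s e = u.1 then 1 else 0) * c u - (if G.t e = u.1 then 1 else 0) * c u := by
        intro u; rw [Nmat]; ring
      rw [Finset.sum_congr rfl (fun u _ => h1 u), Finset.sum_sub_distrib,
        sum_indicator G q c (G.s e), sum_indicator G q c (G.t e)]
      have hext : ∀ v, extq G q c v = cfull v := by
        intro v
        rw [extq]
        by_cases h : v = q
        · rw [dif_pos h, h, hq0]
        · rw [dif_neg h]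
      rw [hext, hext]
    rw [hsum]
    have hiff : G.ReachIn S w (G.s e) ↔ G.ReachIn S w (G.t e) := by
      constructor
      · intro h; exact h.tail ⟨e, heS, Or.inl ⟨rfl, rfl⟩⟩
      · intro h; exact h.tail ⟨e, heS, Or.inr ⟨rfl, rfl⟩⟩
    have hv : ∀ v, cfull v = if G.ReachIn S w v then 1 else 0 := fun _ => rfl
    rw [hv, hv]
    by_cases h : G.ReachIn S w (G.s e)
    · rw [if_pos h, if_pos (hiff.mp h)]; ring
    · rw [if_neg h, if_neg (fun h2 => h (hiff.mpr h2))]; ring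

end JacAux
namespace JacAux
open Matrix
open scoped Classical

section DetSq
variable {ι κ : Type} [Fintype ι] [Fintype κ] [DecidableEq ι] [DecidableEq κ]

lemma detsq_eq_of_image (N : Matrix ι κ ℤ) (f g : ι → κ) (hf : Function.Injective f)
    (hg : Function.Injective g) (him : ∀ i, ∃ j, g j = f i) :
    (N.submatrix id f).det ^ 2 = (N.submatrix id g).det ^ 2 := by
  have hσ : ∀ i, g (Classical.choose (him i)) = f i := fun i => Classical.choose_spec (him i)
  set σ0 : ι → ι := fun i => Classical.choose (him i) with hσ0
  have hσinj : Function.Injective σ0 := by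
    intro a b hab
    apply hf
    rw [← hσ a, ← hσ b]
    exact congrArg g hab
  set τ := Equiv.ofBijective σ0 (Finite.injective_iff_bijective.mp hσinj) with hτ
  have hsub : N.submatrix id f = (N.submatrix id g).submatrix id τ := by
    ext i j
    simp only [Matrix.submatrix_apply, id_eq]
    rw [show (τ j : ι) = σ0 j from rfl, hσ j]
  rw [hsub, Matrix.det_permute']
  rcases Int.units_eq_one_or (Equiv.Perm.sign τ) with h | h <;> rw [h] <;> push_cast <;> ring

end DetSq

variable (G : FinGraph) (q : G.V)

/-- `v` is within distance `k` of `q` using edges of `S`. -/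
def dle (S : Finset G.E) : ℕ → G.V → Prop
  | 0 => fun v => v = q
  | (k+1) => fun v => dle S k v ∨ ∃ u, dle S k u ∧
      (∃ e ∈ S, (G.s e = u ∧ G.t e = v) ∨ (G.s e = v ∧ G.t e = u))

lemma dle_exists (S : Finset G.E) (v : G.V) (h : G.ReachIn S q v) :
    ∃ k, dle G q S k v := by
  induction h with
  | refl => exact ⟨0, rfl⟩
  | tail _ hstep ih =>
    obtain ⟨k, hk⟩ := ih
    exact ⟨k + 1, Or.inr ⟨_, hk, hstep⟩⟩

lemma detS_spanning (S : Finset G.E) (hs : ∀ u v, G.ReachIn S u v)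
    (hS : S.card = Fintype.card (Vne G q)) : (detS (Nmat G q) S) ^ 2 = 1 := by
  set n := Fintype.card (Vne G q) with hn
  -- distance function
  set d : G.V → ℕ := fun v => Nat.find (dle_exists G q S v (hs q v)) with hd
  have hdspec : ∀ v, dle G q S (d v) v := fun v => Nat.find_spec (dle_exists G q S v (hs q v))
  have hdmin : ∀ v k, k < d v → ¬ dle G q S k v := fun v k hk =>
    Nat.find_min (dle_exists G q S v (hs q v)) hk
  have hparent : ∀ v : Vne G q, ∃ e ∈ S, ∃ u, d u < d v.1 ∧
      ((G.s e = u ∧ G.t e = v.1) ∨ (G.s e = v.1 ∧ G.t e = u)) := by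
    intro v
    have hv0 : d v.1 ≠ 0 := by
      intro h0
      have := hdspec v.1
      rw [h0] at this
      exact v.2 this
    obtain ⟨k, hk⟩ := Nat.exists_eq_succ_of_ne_zero hv0
    have hspec := hdspec v.1
    rw [hk] at hspec
    rcases hspec with h | ⟨u, hu, e, he, hor⟩
    · exact absurd h (hdmin v.1 k (by omega))
    · have hdu : d u ≤ k := Nat.find_le hu
      exact ⟨e, he, u, by omega, hor⟩
  choose pe hpeS pu hpu hor using hparent
  -- injectivity of the parent-edge map
  have hpe_inj : Function.Injective pe := by
    intro v w hvw
    by_contra hne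
    have hval : v.1 ≠ w.1 := fun h => hne (Subtype.ext h)
    rcases hor v with ⟨hsv, htv⟩ | ⟨hsv, htv⟩ <;> rcases hor w with ⟨hsw, htw⟩ | ⟨hsw, htw⟩ <;>
      rw [hvw] at hsv htv
    · exact hval (htv.symm.trans htw)
    · have h1 : pu v = w.1 := hsv.symm.trans hsw
      have h2 : v.1 = pu w := htv.symm.trans htw
      have := hpu v; have := hpu w
      rw [h1] at *; rw [← h2] at *
      omega
    · have h1 : v.1 = pu w := hsv.symm.trans hsw
      have h2 : pu v = w.1 := htv.symm.trans htw
      have := hpu v; have := hpu w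
      rw [h2] at *; rw [← h1] at *
      omega
    · exact hval (hsv.symm.trans hsw)
  -- bijection onto S
  have hcardS : Fintype.card {e // e ∈ S} = n := by rw [Fintype.card_coe, hS]
  set pe' : Vne G q → {e // e ∈ S} := fun v => ⟨pe v, hpeS v⟩ with hpe'
  have hpe'_inj : Function.Injective pe' := fun a b hab =>
    hpe_inj (congrArg Subtype.val hab)
  have hpe'_bij : Function.Bijective pe' :=
    (Fintype.bijective_iff_injective_and_card pe').mpr ⟨hpe'_inj, by rw [hcardS]⟩
  -- reduce to the parent-edge matrix
  rw [detS, dif_pos hS]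
  have hsurjpe : ∀ i : Vne G q, ∃ j, pe j = ((colSel S hS i : {x // x ∈ S}) : G.E) := by
    intro i
    obtain ⟨j, hj⟩ := hpe'_bij.2 (colSel S hS i)
    exact ⟨j, congrArg Subtype.val hj⟩
  rw [detsq_eq_of_image (Nmat G q) (fun i => ((colSel S hS i : {x // x ∈ S}) : G.E)) pe
    (fun a b hab => (colSel S hS).injective (Subtype.ext hab)) hpe_inj hsurjpe]
  -- triangularity via sorting by distance
  set e0 : Fin n ≃ Vne G q := (Fintype.equivFin (Vne G q)).symm with he0
  set ddf : Fin n → ℕ := fun i => d (e0 i).1 with hddf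
  set τ := Tuple.sort ddf with hτ
  have hmono : Monotone (ddf ∘ τ) := Tuple.monotone_sort ddf
  set e1 : Fin n ≃ Vne G q := τ.trans e0 with he1
  set M : Matrix (Vne G q) (Vne G q) ℤ := (Nmat G q).submatrix id pe with hM
  have hNapply : ∀ (v : Vne G q) (e : G.E), Nmat G q v e
      = (if G.s e = v.1 then 1 else 0) - (if G.t e = v.1 then 1 else 0) := fun _ _ => rfl
  have hdetM : ((M.submatrix e1 e1)).det = M.det := Matrix.det_submatrix_equiv_self e1 M
  have htri : (M.submatrix e1 e1).BlockTriangular id := by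
    intro i j hji
    simp only [id_eq] at hji
    show Nmat G q (e1 i) (pe (e1 j)) = 0
    have hmle : d (e1 j).1 ≤ d (e1 i).1 := hmono (le_of_lt hji)
    have hkey : ∀ z : G.V, z = pu (e1 j) ∨ z = (e1 j).1 → z ≠ (e1 i).1 := by
      rintro z (h1 | h1) hcon
      · have : d (e1 i).1 < d (e1 j).1 := by rw [← hcon, h1]; exact hpu (e1 j)
        omega
      · have hij : i = j := e1.injective (Subtype.ext (hcon.symm.trans h1).symm).symm
        omega
    have hsor : G.s (pe (e1 j)) = pu (e1 j) ∨ G.s (pe (e1 j)) = (e1 j).1 := by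
      rcases hor (e1 j) with ⟨h1, _⟩ | ⟨h1, _⟩
      · exact Or.inl h1
      · exact Or.inr h1
    have htor : G.t (pe (e1 j)) = pu (e1 j) ∨ G.t (pe (e1 j)) = (e1 j).1 := by
      rcases hor (e1 j) with ⟨_, h2⟩ | ⟨_, h2⟩
      · exact Or.inr h2
      · exact Or.inl h2
    rw [hNapply, if_neg (hkey _ hsor), if_neg (hkey _ htor)]
    ring
  have hdiag : ∀ v : Vne G q, (Nmat G q v (pe v)) ^ 2 = 1 := by
    intro v
    have hpne : pu v ≠ v.1 := by
      have := hpu v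
      intro h; rw [h] at this; omega
    rcases hor v with ⟨h1, h2⟩ | ⟨h1, h2⟩
    · rw [hNapply, if_neg (by rw [h1]; exact hpne), if_pos h2]
      norm_num
    · rw [hNapply, if_pos h1, if_neg (by rw [h2]; exact hpne)]
      norm_num
  rw [show M.det = (M.submatrix e1 e1).det from hdetM.symm,
    Matrix.det_of_upperTriangular htri, ← Finset.prod_pow]
  exact Finset.prod_eq_one (fun i _ => hdiag (e1 i))

end JacAux
namespace JacAux
open Matrix
open scoped Classical
variable (G : FinGraph) (q : G.V)

lemma det_Lmat_eq :
    (Lmat G q).det = ((Finset.univ.filter (fun S => G.IsSpanningTree S)).card : ℤ) := by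
  have h1 : ∀ S ∈ Finset.univ.powersetCard (Fintype.card (Vne G q)),
      (detS (Nmat G q) S) ^ 2 = if G.IsSpanningTree S then 1 else 0 := by
    intro S hS
    have hScard : S.card = Fintype.card (Vne G q) := (Finset.mem_powersetCard.mp hS).2
    by_cases hsp : G.IsSpanningTree S
    · rw [if_pos hsp]
      exact detS_spanning G q S hsp.1 hScard
    · rw [if_neg hsp]
      have hns : ¬ ∀ v, G.ReachIn S q v := by
        intro hall
        exact hsp ⟨reach_all_of_reach_q G q S hall, by
          rw [hScard]; exact (card_V G q).symm⟩
      rw [detS_not_spanning G q S hScard hns]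
      ring
  have h2 : (Finset.univ.powersetCard (Fintype.card (Vne G q))).filter
        (fun S => G.IsSpanningTree S)
      = Finset.univ.filter (fun S => G.IsSpanningTree S) := by
    ext S
    simp only [Finset.mem_filter, Finset.mem_powersetCard, Finset.mem_univ, true_and]
    constructor
    · rintro ⟨_, h⟩; exact h
    · intro h
      refine ⟨⟨Finset.subset_univ _, ?_⟩, h⟩
      have hc1 := h.2
      have hc2 := card_V G q
      omega
  rw [Lmat, cauchyBinet, Finset.sum_congr rfl h1, Finset.sum_boole, h2]

end JacAux

/-- The Jacobian of a finite connected graph is a finite abelian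
group whose order is the number of spanning trees (matrix-tree theorem). -/
theorem jac_card_spanning_trees (G : FinGraph) (hG : G.Connected) :
    Finite G.Jac ∧
      Nat.card G.Jac = Nat.card {T : Finset G.E // G.IsSpanningTree T} := by
  classical
  obtain ⟨q⟩ := hG.1
  have hdet0 : (JacAux.Lmat G q).det ≠ 0 := JacAux.det_Lmat_ne_zero G q hG
  have hcard : Nat.card G.Jac = (JacAux.Lmat G q).det.natAbs := by
    rw [Nat.card_congr (JacAux.jacEquiv G q).toEquiv]
    exact index_range_toLin' (JacAux.Lmat G q) hdet0
  have htrees : Nat.card {T : Finset G.E // G.IsSpanningTree T}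
      = (Finset.univ.filter (fun S => G.IsSpanningTree S)).card := by
    rw [Nat.card_eq_fintype_card, Fintype.card_subtype]
  have hmain : Nat.card G.Jac = Nat.card {T : Finset G.E // G.IsSpanningTree T} := by
    rw [hcard, htrees, JacAux.det_Lmat_eq G q, Int.natAbs_natCast]
  refine ⟨?_, hmain⟩
  apply Nat.finite_of_card_ne_zero
  rw [hcard]
  exact fun h => hdet0 (Int.natAbs_eq_zero.mp h)
end

section
/- If Γ₁ and Γ₂ are finite connected graphs joined at a single vertex (wedge sum), then the Jacobian of the wedge is isomorphic to the direct sum Jac(Γ₁) ⊕ Jac(Γ₂). -/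
/-- The wedge of two graphs: identify `p₁ ∈ Γ₁` with `p₂ ∈ Γ₂`. -/
def FinGraph.wedge (G₁ G₂ : FinGraph) (p₁ : G₁.V) (p₂ : G₂.V) : FinGraph where
  V := {x : G₁.V ⊕ G₂.V // x ≠ Sum.inr p₂}
  E := G₁.E ⊕ G₂.E
  s := fun e =>
    match e with
    | Sum.inl e₁ => ⟨Sum.inl (G₁.s e₁), by simp⟩
    | Sum.inr e₂ =>
        if h : G₂.s e₂ = p₂ then ⟨Sum.inl p₁, by simp⟩
        else ⟨Sum.inr (G₂.s e₂), by simp [h]⟩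
  t := fun e =>
    match e with
    | Sum.inl e₁ => ⟨Sum.inl (G₁.t e₁), by simp⟩
    | Sum.inr e₂ =>
        if h : G₂.t e₂ = p₂ then ⟨Sum.inl p₁, by simp⟩
        else ⟨Sum.inr (G₂.t e₂), by simp [h]⟩

namespace JacWedge

open Finset

lemma sum_sum_type' {α β M : Type*} [Fintype α] [Fintype β] [inst : Fintype (α ⊕ β)]
    [AddCommMonoid M] (f : α ⊕ β → M) :
    ∑ x : α ⊕ β, f x = (∑ a, f (Sum.inl a)) + ∑ b, f (Sum.inr b) := by
  rw [Subsingleton.elim inst (instFintypeSum α β)]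
  exact Fintype.sum_sum_type f

lemma sum_split {α M : Type*} [Fintype α] [DecidableEq α] [AddCommMonoid M]
    (a : α) (F : α → M) :
    ∑ x : α, F x = F a + ∑ x : {x : α // x ≠ a}, F x.1 := by
  rw [← Finset.add_sum_erase _ F (Finset.mem_univ a)]
  congr 1
  exact Finset.sum_subtype _ (by simp) F

lemma deg_divOf (G : FinGraph) (f : G.V → ℤ) : ∑ v, G.divOf f v = 0 := by
  unfold FinGraph.divOf
  rw [Finset.sum_comm]
  apply Finset.sum_eq_zero
  intro e _
  rw [Finset.sum_add_distrib, Finset.sum_ite_eq, Finset.sum_ite_eq]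
  simp

lemma divOf_const (G : FinGraph) (c : ℤ) : G.divOf (fun _ => c) = 0 := by
  funext v; simp [FinGraph.divOf]

variable (G₁ G₂ : FinGraph) (p₁ : G₁.V) (p₂ : G₂.V)

def i1 (v : G₁.V) : (G₁.wedge G₂ p₁ p₂).V := ⟨Sum.inl v, by simp⟩

def j2 (w : G₂.V) : (G₁.wedge G₂ p₁ p₂).V :=
  if h : w = p₂ then ⟨Sum.inl p₁, by simp⟩ else ⟨Sum.inr w, by simp [h]⟩

lemma mk_eq_mk {x y : G₁.V ⊕ G₂.V} {hx : x ≠ Sum.inr p₂} {hy : y ≠ Sum.inr p₂} :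
    (⟨x, hx⟩ : (G₁.wedge G₂ p₁ p₂).V) = ⟨y, hy⟩ ↔ x = y := Subtype.mk_eq_mk

@[simp] lemma i1_inj {a b : G₁.V} :
    i1 G₁ G₂ p₁ p₂ a = i1 G₁ G₂ p₁ p₂ b ↔ a = b := by
  unfold i1; exact Subtype.mk_eq_mk.trans Sum.inl.inj_iff

@[simp] lemma j2_p2 : j2 G₁ G₂ p₁ p₂ p₂ = i1 G₁ G₂ p₁ p₂ p₁ := by
  unfold j2 i1; exact dif_pos rfl

lemma j2_ne {w : G₂.V} (h : w ≠ p₂) :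
    j2 G₁ G₂ p₁ p₂ w = ⟨Sum.inr w, by simp [h]⟩ := dif_neg h

lemma j2_eq_i1_iff {w : G₂.V} {v : G₁.V} :
    j2 G₁ G₂ p₁ p₂ w = i1 G₁ G₂ p₁ p₂ v ↔ w = p₂ ∧ v = p₁ := by
  by_cases h : w = p₂
  · rw [h, j2_p2, i1_inj]; simp [eq_comm]
  · rw [j2_ne G₁ G₂ p₁ p₂ h]; unfold i1
    exact Subtype.mk_eq_mk.trans (by simp [h])

lemma j2_eq_j2_iff {u w : G₂.V} (hw : w ≠ p₂) :
    j2 G₁ G₂ p₁ p₂ u = j2 G₁ G₂ p₁ p₂ w ↔ u = w := by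
  rw [j2_ne G₁ G₂ p₁ p₂ hw]
  by_cases h : u = p₂
  · rw [h, j2_p2]; unfold i1
    exact Subtype.mk_eq_mk.trans ⟨fun h' => absurd h' Sum.inl_ne_inr, fun h' => absurd h'.symm hw⟩
  · rw [j2_ne G₁ G₂ p₁ p₂ h]; exact Subtype.mk_eq_mk.trans Sum.inr.inj_iff

lemma ws_inl (e : G₁.E) :
    (G₁.wedge G₂ p₁ p₂).s (Sum.inl e) = i1 G₁ G₂ p₁ p₂ (G₁.s e) := rfl
lemma wt_inl (e : G₁.E) :
    (G₁.wedge G₂ p₁ p₂).t (Sum.inl e) = i1 G₁ G₂ p₁ p₂ (G₁.t e) := rfl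
lemma ws_inr (e : G₂.E) :
    (G₁.wedge G₂ p₁ p₂).s (Sum.inr e) = j2 G₁ G₂ p₁ p₂ (G₂.s e) := rfl
lemma wt_inr (e : G₂.E) :
    (G₁.wedge G₂ p₁ p₂).t (Sum.inr e) = j2 G₁ G₂ p₁ p₂ (G₂.t e) := rfl

def wEquiv : G₁.V ⊕ {w : G₂.V // w ≠ p₂} ≃ (G₁.wedge G₂ p₁ p₂).V where
  toFun := Sum.elim (i1 G₁ G₂ p₁ p₂) (fun w => ⟨Sum.inr w.1, by simp [w.2]⟩)
  invFun := fun x => match x with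
    | ⟨Sum.inl v, _⟩ => Sum.inl v
    | ⟨Sum.inr w, h⟩ => Sum.inr ⟨w, by simpa using h⟩
  left_inv := by rintro (v | w) <;> rfl
  right_inv := by rintro ⟨(v | w), h⟩ <;> rfl

/-- The auxiliary sum of a divisor on the wedge over the second graph. -/
def S (D : (G₁.wedge G₂ p₁ p₂).V → ℤ) : ℤ := ∑ w : G₂.V, D (j2 G₁ G₂ p₁ p₂ w)

lemma sum_wedge (D : (G₁.wedge G₂ p₁ p₂).V → ℤ) :
    ∑ x, D x = (∑ v, D (i1 G₁ G₂ p₁ p₂ v))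
      + (S G₁ G₂ p₁ p₂ D - D (i1 G₁ G₂ p₁ p₂ p₁)) := by
  have h1 : ∑ x, D x = (∑ v, D (i1 G₁ G₂ p₁ p₂ v))
      + ∑ x : {w : G₂.V // w ≠ p₂}, D ⟨Sum.inr x.1, by simp [x.2]⟩ := by
    rw [← Equiv.sum_comp (wEquiv G₁ G₂ p₁ p₂) D, sum_sum_type']
    rfl
  have h2 : S G₁ G₂ p₁ p₂ D = D (i1 G₁ G₂ p₁ p₂ p₁)
      + ∑ x : {w : G₂.V // w ≠ p₂}, D ⟨Sum.inr x.1, by simp [x.2]⟩ := by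
    rw [S, sum_split p₂ (fun w => D (j2 G₁ G₂ p₁ p₂ w))]
    congr 1
    · rw [j2_p2]
    · exact Finset.sum_congr rfl fun x _ => by rw [j2_ne G₁ G₂ p₁ p₂ x.2]
  rw [h1, h2]; ring

noncomputable def Phi1 : (((G₁.wedge G₂ p₁ p₂).V → ℤ)) →+ (G₁.V → ℤ) where
  toFun D v := D (i1 G₁ G₂ p₁ p₂ v) +
    (if v = p₁ then S G₁ G₂ p₁ p₂ D - D (i1 G₁ G₂ p₁ p₂ p₁) else 0)
  map_zero' := by funext v; simp [S]
  map_add' D D' := by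
    funext v
    simp only [Pi.add_apply, S, Finset.sum_add_distrib]
    split_ifs <;> ring

noncomputable def Phi2 : (((G₁.wedge G₂ p₁ p₂).V → ℤ)) →+ (G₂.V → ℤ) where
  toFun D v := D (j2 G₁ G₂ p₁ p₂ v) - (if v = p₂ then S G₁ G₂ p₁ p₂ D else 0)
  map_zero' := by funext v; simp [S]
  map_add' D D' := by
    funext v
    simp only [Pi.add_apply, S, Finset.sum_add_distrib]
    split_ifs <;> ring

noncomputable def Psi1 : (G₁.V → ℤ) →+ ((G₁.wedge G₂ p₁ p₂).V → ℤ) where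
  toFun D x := Sum.elim D (fun _ => 0) x.1
  map_zero' := by funext x; rcases x with ⟨v | w, hx⟩ <;> rfl
  map_add' D D' := by funext x; rcases x with ⟨v | w, hx⟩ <;> rfl

noncomputable def Psi2 : (G₂.V → ℤ) →+ ((G₁.wedge G₂ p₁ p₂).V → ℤ) where
  toFun D x := Sum.elim (fun v => if v = p₁ then D p₂ else 0) D x.1
  map_zero' := by funext x; rcases x with ⟨v | w, hx⟩ <;> simp <;> rfl
  map_add' D D' := by
    funext x
    show Sum.elim (fun v => if v = p₁ then (D + D') p₂ else 0) (D + D') x.1 = Sum.elim (fun v => if v = p₁ then D p₂ else 0) D x.1 + Sum.elim (fun v => if v = p₁ then D' p₂ else 0) D' x.1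
    rcases x with ⟨v | w, hx⟩ <;> simp
    split_ifs <;> simp

@[simp] lemma Phi1_apply (D : (G₁.wedge G₂ p₁ p₂).V → ℤ) (v : G₁.V) :
    Phi1 G₁ G₂ p₁ p₂ D v = D (i1 G₁ G₂ p₁ p₂ v) +
      (if v = p₁ then S G₁ G₂ p₁ p₂ D - D (i1 G₁ G₂ p₁ p₂ p₁) else 0) := rfl

@[simp] lemma Phi2_apply (D : (G₁.wedge G₂ p₁ p₂).V → ℤ) (v : G₂.V) :
    Phi2 G₁ G₂ p₁ p₂ D v = D (j2 G₁ G₂ p₁ p₂ v) -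
      (if v = p₂ then S G₁ G₂ p₁ p₂ D else 0) := rfl

@[simp] lemma Psi1_i1 (D : G₁.V → ℤ) (v : G₁.V) :
    Psi1 G₁ G₂ p₁ p₂ D (i1 G₁ G₂ p₁ p₂ v) = D v := rfl

@[simp] lemma Psi2_i1 (D : G₂.V → ℤ) (v : G₁.V) :
    Psi2 G₁ G₂ p₁ p₂ D (i1 G₁ G₂ p₁ p₂ v) = if v = p₁ then D p₂ else 0 := rfl

@[simp] lemma Psi1_j2 (D : G₁.V → ℤ) (w : G₂.V) :
    Psi1 G₁ G₂ p₁ p₂ D (j2 G₁ G₂ p₁ p₂ w) = if w = p₂ then D p₁ else 0 := by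
  by_cases h : w = p₂
  · rw [h, j2_p2, if_pos rfl]; rfl
  · rw [j2_ne G₁ G₂ p₁ p₂ h, if_neg h]; rfl

@[simp] lemma Psi2_j2 (D : G₂.V → ℤ) (w : G₂.V) :
    Psi2 G₁ G₂ p₁ p₂ D (j2 G₁ G₂ p₁ p₂ w) = if w = p₂ then D p₂ else D w := by
  by_cases h : w = p₂
  · rw [h, j2_p2, if_pos rfl]
    show (if p₁ = p₁ then D p₂ else 0) = D p₂
    rw [if_pos rfl]
  · rw [j2_ne G₁ G₂ p₁ p₂ h, if_neg h]; rfl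

lemma S_Psi1 (D : G₁.V → ℤ) : S G₁ G₂ p₁ p₂ (Psi1 G₁ G₂ p₁ p₂ D) = D p₁ := by
  rw [S]
  simp [Finset.sum_ite_eq']

lemma S_Psi2 (D : G₂.V → ℤ) : S G₁ G₂ p₁ p₂ (Psi2 G₁ G₂ p₁ p₂ D) = ∑ w, D w := by
  rw [S]
  refine Finset.sum_congr rfl fun w _ => ?_
  rw [Psi2_j2]
  split_ifs with h
  · rw [h]
  · rfl

lemma deg_Phi1 (D : (G₁.wedge G₂ p₁ p₂).V → ℤ) :
    G₁.deg (Phi1 G₁ G₂ p₁ p₂ D) = (G₁.wedge G₂ p₁ p₂).deg D := by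
  unfold FinGraph.deg
  simp only [Phi1_apply, Finset.sum_add_distrib, Finset.sum_ite_eq', Finset.mem_univ,
    if_true]
  rw [sum_wedge G₁ G₂ p₁ p₂ D]

lemma deg_Phi2 (D : (G₁.wedge G₂ p₁ p₂).V → ℤ) :
    G₂.deg (Phi2 G₁ G₂ p₁ p₂ D) = 0 := by
  unfold FinGraph.deg
  simp only [Phi2_apply, Finset.sum_sub_distrib, Finset.sum_ite_eq', Finset.mem_univ,
    if_true]
  rw [← S]; ring

lemma deg_Psi1 (D : G₁.V → ℤ) :
    (G₁.wedge G₂ p₁ p₂).deg (Psi1 G₁ G₂ p₁ p₂ D) = G₁.deg D := by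
  unfold FinGraph.deg
  rw [sum_wedge, S_Psi1]
  simp

lemma deg_Psi2 (D : G₂.V → ℤ) :
    (G₁.wedge G₂ p₁ p₂).deg (Psi2 G₁ G₂ p₁ p₂ D) = G₂.deg D := by
  unfold FinGraph.deg
  rw [sum_wedge, S_Psi2]
  simp [Finset.sum_ite_eq']

lemma PsiPhi (D : (G₁.wedge G₂ p₁ p₂).V → ℤ) :
    Psi1 G₁ G₂ p₁ p₂ (Phi1 G₁ G₂ p₁ p₂ D) + Psi2 G₁ G₂ p₁ p₂ (Phi2 G₁ G₂ p₁ p₂ D)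
      = D := by
  funext x
  rcases x with ⟨v | w, hx⟩
  · have hx' : (⟨Sum.inl v, hx⟩ : (G₁.wedge G₂ p₁ p₂).V) = i1 G₁ G₂ p₁ p₂ v := rfl
    rw [hx', Pi.add_apply, Psi1_i1, Psi2_i1, Phi1_apply]
    by_cases hv : v = p₁
    · subst hv
      rw [if_pos rfl, if_pos rfl, Phi2_apply, if_pos rfl, j2_p2]
      ring
    · rw [if_neg hv, if_neg hv]; ring
  · have hw : w ≠ p₂ := by simpa using hx
    have hx' : (⟨Sum.inr w, hx⟩ : (G₁.wedge G₂ p₁ p₂).V) = j2 G₁ G₂ p₁ p₂ w :=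
      (j2_ne G₁ G₂ p₁ p₂ hw).symm
    rw [hx', Pi.add_apply, Psi1_j2, Psi2_j2, if_neg hw, if_neg hw, Phi2_apply,
      if_neg hw]
    ring

lemma Phi1_Psi1 (D : G₁.V → ℤ) :
    Phi1 G₁ G₂ p₁ p₂ (Psi1 G₁ G₂ p₁ p₂ D) = D := by
  funext v
  rw [Phi1_apply, Psi1_i1, Psi1_i1, S_Psi1]
  split_ifs <;> ring

lemma Phi2_Psi1 (D : G₁.V → ℤ) :
    Phi2 G₁ G₂ p₁ p₂ (Psi1 G₁ G₂ p₁ p₂ D) = 0 := by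
  funext v
  rw [Phi2_apply, Psi1_j2, S_Psi1]
  split_ifs <;> simp

lemma Phi1_Psi2 (D : G₂.V → ℤ) (h : G₂.deg D = 0) :
    Phi1 G₁ G₂ p₁ p₂ (Psi2 G₁ G₂ p₁ p₂ D) = 0 := by
  have h' : ∑ w, D w = 0 := h
  funext v
  rw [Phi1_apply, Psi2_i1, Psi2_i1, S_Psi2, h']
  by_cases hv : v = p₁ <;> simp [hv]

lemma Phi2_Psi2 (D : G₂.V → ℤ) (h : G₂.deg D = 0) :
    Phi2 G₁ G₂ p₁ p₂ (Psi2 G₁ G₂ p₁ p₂ D) = D := by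
  have h' : ∑ w, D w = 0 := h
  funext v
  rw [Phi2_apply, Psi2_j2, S_Psi2, h']
  split_ifs with hv
  · rw [hv]; ring
  · ring

lemma wedge_sum_E (g : (G₁.wedge G₂ p₁ p₂).E → ℤ) :
    ∑ e : (G₁.wedge G₂ p₁ p₂).E, g e
      = (∑ a : G₁.E, g (Sum.inl a)) + ∑ b : G₂.E, g (Sum.inr b) :=
  sum_sum_type' g

lemma divOf_i1 (f : (G₁.wedge G₂ p₁ p₂).V → ℤ) (v : G₁.V) :
    (G₁.wedge G₂ p₁ p₂).divOf f (i1 G₁ G₂ p₁ p₂ v)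
      = G₁.divOf (fun u => f (i1 G₁ G₂ p₁ p₂ u)) v
        + (if v = p₁ then G₂.divOf (fun u => f (j2 G₁ G₂ p₁ p₂ u)) p₂ else 0) := by
  unfold FinGraph.divOf
  rw [wedge_sum_E]
  congr 1
  · refine Finset.sum_congr rfl fun e _ => ?_
    rw [ws_inl, wt_inl]
    by_cases hs : G₁.s e = v
    · rw [if_pos (by rw [hs]), if_pos hs]
      by_cases ht : G₁.t e = v
      · rw [if_pos (by rw [ht]), if_pos ht]
      · rw [if_neg (by simpa using ht), if_neg ht]
    · rw [if_neg (by simpa using hs), if_neg hs]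
      by_cases ht : G₁.t e = v
      · rw [if_pos (by rw [ht]), if_pos ht]
      · rw [if_neg (by simpa using ht), if_neg ht]
  · by_cases hv : v = p₁
    · rw [hv, if_pos rfl]
      refine Finset.sum_congr rfl fun e _ => ?_
      rw [ws_inr, wt_inr]
      by_cases hs : G₂.s e = p₂
      · rw [if_pos (by rw [hs]; exact j2_p2 G₁ G₂ p₁ p₂), if_pos hs]
        by_cases ht : G₂.t e = p₂
        · rw [if_pos (by rw [ht]; exact j2_p2 G₁ G₂ p₁ p₂), if_pos ht]
        · rw [if_neg (fun hc => ht ((j2_eq_i1_iff G₁ G₂ p₁ p₂).mp hc).1), if_neg ht]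
      · rw [if_neg (fun hc => hs ((j2_eq_i1_iff G₁ G₂ p₁ p₂).mp hc).1), if_neg hs]
        by_cases ht : G₂.t e = p₂
        · rw [if_pos (by rw [ht]; exact j2_p2 G₁ G₂ p₁ p₂), if_pos ht]
        · rw [if_neg (fun hc => ht ((j2_eq_i1_iff G₁ G₂ p₁ p₂).mp hc).1), if_neg ht]
    · rw [if_neg hv]
      refine Finset.sum_eq_zero fun e _ => ?_
      rw [ws_inr, wt_inr,
        if_neg (fun hc => hv ((j2_eq_i1_iff G₁ G₂ p₁ p₂).mp hc).2),
        if_neg (fun hc => hv ((j2_eq_i1_iff G₁ G₂ p₁ p₂).mp hc).2)]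
      ring

lemma divOf_j2 (f : (G₁.wedge G₂ p₁ p₂).V → ℤ) {w : G₂.V} (hw : w ≠ p₂) :
    (G₁.wedge G₂ p₁ p₂).divOf f (j2 G₁ G₂ p₁ p₂ w)
      = G₂.divOf (fun u => f (j2 G₁ G₂ p₁ p₂ u)) w := by
  unfold FinGraph.divOf
  rw [wedge_sum_E]
  have hne : ∀ v : G₁.V, i1 G₁ G₂ p₁ p₂ v ≠ j2 G₁ G₂ p₁ p₂ w := by
    intro v hc
    rw [j2_ne G₁ G₂ p₁ p₂ hw] at hc
    exact Sum.inl_ne_inr ((mk_eq_mk G₁ G₂ p₂).mp hc)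
  have h0 : (∑ e : G₁.E,
      ((if (G₁.wedge G₂ p₁ p₂).s (Sum.inl e) = j2 G₁ G₂ p₁ p₂ w then
          f ((G₁.wedge G₂ p₁ p₂).t (Sum.inl e)) - f ((G₁.wedge G₂ p₁ p₂).s (Sum.inl e)) else 0)
        + (if (G₁.wedge G₂ p₁ p₂).t (Sum.inl e) = j2 G₁ G₂ p₁ p₂ w then
          f ((G₁.wedge G₂ p₁ p₂).s (Sum.inl e)) - f ((G₁.wedge G₂ p₁ p₂).t (Sum.inl e)) else 0))) = 0 := by
    refine Finset.sum_eq_zero fun e _ => ?_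
    rw [ws_inl, wt_inl, if_neg (hne _), if_neg (hne _)]
    ring
  rw [h0, zero_add]
  refine Finset.sum_congr rfl fun e _ => ?_
  rw [ws_inr, wt_inr]
  by_cases hs : G₂.s e = w
  · rw [if_pos (by rw [hs]), if_pos hs]
    by_cases ht : G₂.t e = w
    · rw [if_pos (by rw [ht]), if_pos ht]
    · rw [if_neg (by rwa [j2_eq_j2_iff G₁ G₂ p₁ p₂ hw]), if_neg ht]
  · rw [if_neg (by rwa [j2_eq_j2_iff G₁ G₂ p₁ p₂ hw]), if_neg hs]
    by_cases ht : G₂.t e = w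
    · rw [if_pos (by rw [ht]), if_pos ht]
    · rw [if_neg (by rwa [j2_eq_j2_iff G₁ G₂ p₁ p₂ hw]), if_neg ht]

lemma S_divOf (f : (G₁.wedge G₂ p₁ p₂).V → ℤ) :
    S G₁ G₂ p₁ p₂ ((G₁.wedge G₂ p₁ p₂).divOf f)
      = (G₁.wedge G₂ p₁ p₂).divOf f (i1 G₁ G₂ p₁ p₂ p₁)
        - G₂.divOf (fun u => f (j2 G₁ G₂ p₁ p₂ u)) p₂ := by
  have hsub : ∑ x : {w : G₂.V // w ≠ p₂},
      (G₁.wedge G₂ p₁ p₂).divOf f (j2 G₁ G₂ p₁ p₂ x.1)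
      = ∑ x : {w : G₂.V // w ≠ p₂}, G₂.divOf (fun u => f (j2 G₁ G₂ p₁ p₂ u)) x.1 :=
    Finset.sum_congr rfl fun x _ => divOf_j2 G₁ G₂ p₁ p₂ f x.2
  have h3 := sum_split p₂ (G₂.divOf (fun u => f (j2 G₁ G₂ p₁ p₂ u)))
  have h4 := deg_divOf G₂ (fun u => f (j2 G₁ G₂ p₁ p₂ u))
  rw [S, sum_split p₂ (fun w => (G₁.wedge G₂ p₁ p₂).divOf f (j2 G₁ G₂ p₁ p₂ w)),
    j2_p2, hsub]
  rw [h4] at h3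
  omega

lemma Phi1_divOf (f : (G₁.wedge G₂ p₁ p₂).V → ℤ) :
    Phi1 G₁ G₂ p₁ p₂ ((G₁.wedge G₂ p₁ p₂).divOf f)
      = G₁.divOf (fun u => f (i1 G₁ G₂ p₁ p₂ u)) := by
  funext v
  rw [Phi1_apply, S_divOf, divOf_i1]
  split_ifs <;> ring

lemma Phi2_divOf (f : (G₁.wedge G₂ p₁ p₂).V → ℤ) :
    Phi2 G₁ G₂ p₁ p₂ ((G₁.wedge G₂ p₁ p₂).divOf f)
      = G₂.divOf (fun u => f (j2 G₁ G₂ p₁ p₂ u)) := by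
  funext v
  rw [Phi2_apply]
  by_cases hv : v = p₂
  · subst hv
    rw [if_pos rfl, S_divOf, j2_p2]
    ring
  · rw [if_neg hv, divOf_j2 G₁ G₂ p₁ p₂ f hv]
    ring

lemma Psi1_divOf (f : G₁.V → ℤ) :
    Psi1 G₁ G₂ p₁ p₂ (G₁.divOf f)
      = (G₁.wedge G₂ p₁ p₂).divOf
          (fun x => Sum.elim f (fun _ => f p₁) x.1) := by
  set F : (G₁.wedge G₂ p₁ p₂).V → ℤ := fun x => Sum.elim f (fun _ => f p₁) x.1 with hF
  have hFi1 : (fun u => F (i1 G₁ G₂ p₁ p₂ u)) = f := rfl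
  have hFj2 : (fun u => F (j2 G₁ G₂ p₁ p₂ u)) = fun _ => f p₁ := by
    funext u
    by_cases h : u = p₂
    · rw [h, j2_p2]; rfl
    · rw [j2_ne G₁ G₂ p₁ p₂ h]; rfl
  funext x
  rcases x with ⟨v | w, hx⟩
  · have hx' : (⟨Sum.inl v, hx⟩ : (G₁.wedge G₂ p₁ p₂).V) = i1 G₁ G₂ p₁ p₂ v := rfl
    rw [hx', Psi1_i1, divOf_i1, hFi1, hFj2, divOf_const]
    simp
  · have hw : w ≠ p₂ := by simpa using hx
    have hx' : (⟨Sum.inr w, hx⟩ : (G₁.wedge G₂ p₁ p₂).V) = j2 G₁ G₂ p₁ p₂ w :=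
      (j2_ne G₁ G₂ p₁ p₂ hw).symm
    rw [hx', Psi1_j2, if_neg hw, divOf_j2 G₁ G₂ p₁ p₂ _ hw, hFj2, divOf_const]
    rfl

lemma Psi2_divOf (f : G₂.V → ℤ) :
    Psi2 G₁ G₂ p₁ p₂ (G₂.divOf f)
      = (G₁.wedge G₂ p₁ p₂).divOf
          (fun x => Sum.elim (fun _ => f p₂) f x.1) := by
  set F : (G₁.wedge G₂ p₁ p₂).V → ℤ := fun x => Sum.elim (fun _ => f p₂) f x.1 with hF
  have hFi1 : (fun u => F (i1 G₁ G₂ p₁ p₂ u)) = fun _ => f p₂ := rfl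
  have hFj2 : (fun u => F (j2 G₁ G₂ p₁ p₂ u)) = f := by
    funext u
    by_cases h : u = p₂
    · rw [h, j2_p2]; rfl
    · rw [j2_ne G₁ G₂ p₁ p₂ h]; rfl
  funext x
  rcases x with ⟨v | w, hx⟩
  · have hx' : (⟨Sum.inl v, hx⟩ : (G₁.wedge G₂ p₁ p₂).V) = i1 G₁ G₂ p₁ p₂ v := rfl
    rw [hx', Psi2_i1, divOf_i1, hFi1, hFj2, divOf_const]
    simp
  · have hw : w ≠ p₂ := by simpa using hx
    have hx' : (⟨Sum.inr w, hx⟩ : (G₁.wedge G₂ p₁ p₂).V) = j2 G₁ G₂ p₁ p₂ w :=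
      (j2_ne G₁ G₂ p₁ p₂ hw).symm
    rw [hx', Psi2_j2, if_neg hw, divOf_j2 G₁ G₂ p₁ p₂ _ hw, hFj2]

noncomputable def Fker1 : (G₁.wedge G₂ p₁ p₂).degHom.ker →+ G₁.degHom.ker :=
  AddMonoidHom.codRestrict
    ((Phi1 G₁ G₂ p₁ p₂).comp (G₁.wedge G₂ p₁ p₂).degHom.ker.subtype) _
    (fun x => by
      rw [AddMonoidHom.mem_ker]
      show G₁.deg (Phi1 G₁ G₂ p₁ p₂ x.1) = 0
      rw [deg_Phi1]
      exact AddMonoidHom.mem_ker.mp x.2)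

noncomputable def Fker2 : (G₁.wedge G₂ p₁ p₂).degHom.ker →+ G₂.degHom.ker :=
  AddMonoidHom.codRestrict
    ((Phi2 G₁ G₂ p₁ p₂).comp (G₁.wedge G₂ p₁ p₂).degHom.ker.subtype) _
    (fun x => by
      rw [AddMonoidHom.mem_ker]
      show G₂.deg (Phi2 G₁ G₂ p₁ p₂ x.1) = 0
      exact deg_Phi2 G₁ G₂ p₁ p₂ x.1)

noncomputable def Gker1 : G₁.degHom.ker →+ (G₁.wedge G₂ p₁ p₂).degHom.ker :=
  AddMonoidHom.codRestrict
    ((Psi1 G₁ G₂ p₁ p₂).comp G₁.degHom.ker.subtype) _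
    (fun x => by
      rw [AddMonoidHom.mem_ker]
      show (G₁.wedge G₂ p₁ p₂).deg (Psi1 G₁ G₂ p₁ p₂ x.1) = 0
      rw [deg_Psi1]
      exact AddMonoidHom.mem_ker.mp x.2)

noncomputable def Gker2 : G₂.degHom.ker →+ (G₁.wedge G₂ p₁ p₂).degHom.ker :=
  AddMonoidHom.codRestrict
    ((Psi2 G₁ G₂ p₁ p₂).comp G₂.degHom.ker.subtype) _
    (fun x => by
      rw [AddMonoidHom.mem_ker]
      show (G₁.wedge G₂ p₁ p₂).deg (Psi2 G₁ G₂ p₁ p₂ x.1) = 0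
      rw [deg_Psi2]
      exact AddMonoidHom.mem_ker.mp x.2)

lemma lapHom_apply (G : FinGraph) (f : G.V → ℤ) : G.lapHom f = G.divOf f := rfl

lemma Fker1_coe (x : (G₁.wedge G₂ p₁ p₂).degHom.ker) :
    (Fker1 G₁ G₂ p₁ p₂ x : G₁.V → ℤ) = Phi1 G₁ G₂ p₁ p₂ x.1 := rfl

lemma Fker2_coe (x : (G₁.wedge G₂ p₁ p₂).degHom.ker) :
    (Fker2 G₁ G₂ p₁ p₂ x : G₂.V → ℤ) = Phi2 G₁ G₂ p₁ p₂ x.1 := rfl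

lemma Gker1_coe (x : G₁.degHom.ker) :
    (Gker1 G₁ G₂ p₁ p₂ x : (G₁.wedge G₂ p₁ p₂).V → ℤ) = Psi1 G₁ G₂ p₁ p₂ x.1 := rfl

lemma Gker2_coe (x : G₂.degHom.ker) :
    (Gker2 G₁ G₂ p₁ p₂ x : (G₁.wedge G₂ p₁ p₂).V → ℤ) = Psi2 G₁ G₂ p₁ p₂ x.1 := rfl

noncomputable def Xi : (G₁.wedge G₂ p₁ p₂).Jac →+ G₁.Jac × G₂.Jac :=
  QuotientAddGroup.lift _
    (((QuotientAddGroup.mk'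
        (G₁.lapHom.range.addSubgroupOf G₁.degHom.ker)).comp (Fker1 G₁ G₂ p₁ p₂)).prod
     ((QuotientAddGroup.mk'
        (G₂.lapHom.range.addSubgroupOf G₂.degHom.ker)).comp (Fker2 G₁ G₂ p₁ p₂)))
    (by
      intro x hx
      obtain ⟨f, hf⟩ := AddSubgroup.mem_addSubgroupOf.mp hx
      have hf' : (G₁.wedge G₂ p₁ p₂).divOf f = (x : _ → ℤ) := hf
      apply AddMonoidHom.mem_ker.mpr
      show (QuotientAddGroup.mk' (G₁.lapHom.range.addSubgroupOf G₁.degHom.ker)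
              (Fker1 G₁ G₂ p₁ p₂ x),
            QuotientAddGroup.mk' (G₂.lapHom.range.addSubgroupOf G₂.degHom.ker)
              (Fker2 G₁ G₂ p₁ p₂ x)) = 0
      rw [Prod.mk_eq_zero, QuotientAddGroup.mk'_apply, QuotientAddGroup.mk'_apply,
        QuotientAddGroup.eq_zero_iff, QuotientAddGroup.eq_zero_iff]
      constructor
      · refine AddSubgroup.mem_addSubgroupOf.mpr ⟨fun u => f (i1 G₁ G₂ p₁ p₂ u), ?_⟩
        rw [lapHom_apply, Fker1_coe, ← hf', Phi1_divOf]
      · refine AddSubgroup.mem_addSubgroupOf.mpr ⟨fun u => f (j2 G₁ G₂ p₁ p₂ u), ?_⟩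
        rw [lapHom_apply, Fker2_coe, ← hf', Phi2_divOf])

noncomputable def Theta1 : G₁.Jac →+ (G₁.wedge G₂ p₁ p₂).Jac :=
  QuotientAddGroup.lift _
    ((QuotientAddGroup.mk'
        (((G₁.wedge G₂ p₁ p₂).lapHom.range).addSubgroupOf
          (G₁.wedge G₂ p₁ p₂).degHom.ker)).comp (Gker1 G₁ G₂ p₁ p₂))
    (by
      intro x hx
      obtain ⟨f, hf⟩ := AddSubgroup.mem_addSubgroupOf.mp hx
      have hf' : G₁.divOf f = (x : _ → ℤ) := hf
      apply AddMonoidHom.mem_ker.mpr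
      show QuotientAddGroup.mk'
          (((G₁.wedge G₂ p₁ p₂).lapHom.range).addSubgroupOf
            (G₁.wedge G₂ p₁ p₂).degHom.ker) (Gker1 G₁ G₂ p₁ p₂ x) = 0
      rw [QuotientAddGroup.mk'_apply, QuotientAddGroup.eq_zero_iff]
      refine AddSubgroup.mem_addSubgroupOf.mpr
        ⟨fun y => Sum.elim f (fun _ => f p₁) y.1, ?_⟩
      rw [lapHom_apply, Gker1_coe, ← hf', Psi1_divOf])

noncomputable def Theta2 : G₂.Jac →+ (G₁.wedge G₂ p₁ p₂).Jac :=
  QuotientAddGroup.lift _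
    ((QuotientAddGroup.mk'
        (((G₁.wedge G₂ p₁ p₂).lapHom.range).addSubgroupOf
          (G₁.wedge G₂ p₁ p₂).degHom.ker)).comp (Gker2 G₁ G₂ p₁ p₂))
    (by
      intro x hx
      obtain ⟨f, hf⟩ := AddSubgroup.mem_addSubgroupOf.mp hx
      have hf' : G₂.divOf f = (x : _ → ℤ) := hf
      apply AddMonoidHom.mem_ker.mpr
      show QuotientAddGroup.mk'
          (((G₁.wedge G₂ p₁ p₂).lapHom.range).addSubgroupOf
            (G₁.wedge G₂ p₁ p₂).degHom.ker) (Gker2 G₁ G₂ p₁ p₂ x) = 0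
      rw [QuotientAddGroup.mk'_apply, QuotientAddGroup.eq_zero_iff]
      refine AddSubgroup.mem_addSubgroupOf.mpr
        ⟨fun y => Sum.elim (fun _ => f p₂) f y.1, ?_⟩
      rw [lapHom_apply, Gker2_coe, ← hf', Psi2_divOf])

noncomputable def Theta : G₁.Jac × G₂.Jac →+ (G₁.wedge G₂ p₁ p₂).Jac :=
  (Theta1 G₁ G₂ p₁ p₂).coprod (Theta2 G₁ G₂ p₁ p₂)

lemma FG11 (D₁ : G₁.degHom.ker) :
    Fker1 G₁ G₂ p₁ p₂ (Gker1 G₁ G₂ p₁ p₂ D₁) = D₁ :=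
  Subtype.ext (by
    rw [Fker1_coe, Gker1_coe]
    exact Phi1_Psi1 G₁ G₂ p₁ p₂ D₁.1)

lemma FG21 (D₁ : G₁.degHom.ker) :
    Fker2 G₁ G₂ p₁ p₂ (Gker1 G₁ G₂ p₁ p₂ D₁) = 0 :=
  Subtype.ext (by
    rw [Fker2_coe, Gker1_coe, ZeroMemClass.coe_zero]
    exact Phi2_Psi1 G₁ G₂ p₁ p₂ D₁.1)

lemma FG12 (D₂ : G₂.degHom.ker) :
    Fker1 G₁ G₂ p₁ p₂ (Gker2 G₁ G₂ p₁ p₂ D₂) = 0 :=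
  Subtype.ext (by
    rw [Fker1_coe, Gker2_coe, ZeroMemClass.coe_zero]
    exact Phi1_Psi2 G₁ G₂ p₁ p₂ D₂.1 (AddMonoidHom.mem_ker.mp D₂.2))

lemma FG22 (D₂ : G₂.degHom.ker) :
    Fker2 G₁ G₂ p₁ p₂ (Gker2 G₁ G₂ p₁ p₂ D₂) = D₂ :=
  Subtype.ext (by
    rw [Fker2_coe, Gker2_coe]
    exact Phi2_Psi2 G₁ G₂ p₁ p₂ D₂.1 (AddMonoidHom.mem_ker.mp D₂.2))

lemma GF (D : (G₁.wedge G₂ p₁ p₂).degHom.ker) :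
    Gker1 G₁ G₂ p₁ p₂ (Fker1 G₁ G₂ p₁ p₂ D)
      + Gker2 G₁ G₂ p₁ p₂ (Fker2 G₁ G₂ p₁ p₂ D) = D :=
  Subtype.ext (by
    rw [AddSubgroup.coe_add, Gker1_coe, Gker2_coe, Fker1_coe, Fker2_coe]
    exact PsiPhi G₁ G₂ p₁ p₂ D.1)

lemma Theta_Xi (x : (G₁.wedge G₂ p₁ p₂).Jac) :
    Theta G₁ G₂ p₁ p₂ (Xi G₁ G₂ p₁ p₂ x) = x := by
  refine QuotientAddGroup.induction_on x fun D => ?_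
  have h : Theta G₁ G₂ p₁ p₂ (Xi G₁ G₂ p₁ p₂
        (QuotientAddGroup.mk D : (G₁.wedge G₂ p₁ p₂).Jac))
      = (QuotientAddGroup.mk (Gker1 G₁ G₂ p₁ p₂ (Fker1 G₁ G₂ p₁ p₂ D)
          + Gker2 G₁ G₂ p₁ p₂ (Fker2 G₁ G₂ p₁ p₂ D)) :
        (G₁.wedge G₂ p₁ p₂).Jac) := rfl
  rw [h, GF]

lemma Xi_Theta (y : G₁.Jac × G₂.Jac) :
    Xi G₁ G₂ p₁ p₂ (Theta G₁ G₂ p₁ p₂ y) = y := by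
  obtain ⟨a, b⟩ := y
  refine QuotientAddGroup.induction_on a fun D₁ => ?_
  refine QuotientAddGroup.induction_on b fun D₂ => ?_
  have h : Xi G₁ G₂ p₁ p₂ (Theta G₁ G₂ p₁ p₂
        ((QuotientAddGroup.mk D₁ : G₁.Jac), (QuotientAddGroup.mk D₂ : G₂.Jac)))
      = ((QuotientAddGroup.mk
            (Fker1 G₁ G₂ p₁ p₂ (Gker1 G₁ G₂ p₁ p₂ D₁ + Gker2 G₁ G₂ p₁ p₂ D₂)) : G₁.Jac),
         (QuotientAddGroup.mk
            (Fker2 G₁ G₂ p₁ p₂ (Gker1 G₁ G₂ p₁ p₂ D₁ + Gker2 G₁ G₂ p₁ p₂ D₂)) : G₂.Jac)) := rfl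
  rw [h, (Fker1 G₁ G₂ p₁ p₂).map_add, (Fker2 G₁ G₂ p₁ p₂).map_add,
    FG11, FG21, FG12, FG22, add_zero, zero_add]
  rfl

end JacWedge

/-- The Jacobian of a wedge of two connected graphs is the direct
sum of their Jacobians. -/
theorem jac_wedge (G₁ G₂ : FinGraph) (p₁ : G₁.V) (p₂ : G₂.V)
    (h₁ : G₁.Connected) (h₂ : G₂.Connected) :
    Nonempty ((G₁.wedge G₂ p₁ p₂).Jac ≃+ G₁.Jac × G₂.Jac) := by
  exact ⟨{ toFun := JacWedge.Xi G₁ G₂ p₁ p₂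
           invFun := JacWedge.Theta G₁ G₂ p₁ p₂
           left_inv := JacWedge.Theta_Xi G₁ G₂ p₁ p₂
           right_inv := JacWedge.Xi_Theta G₁ G₂ p₁ p₂
           map_add' := (JacWedge.Xi G₁ G₂ p₁ p₂).map_add }⟩
end

section
/- Let π : G̃ → G be a free double cover with involution ι, and suppose open edges E₁,…,E_d are removed from G so that the complement Γ' is relatively connected (the preimage under π of every connected component of Γ' is connected). Then d ≤ g - 1, where g is the genus of G. Moreover, every connected component of Γ' has genus 1 if and only if d = g - 1. -/
section Aux
variable {α : Type*}

private def chainT (r : α → α → Prop) : ℕ → α → α → Prop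
  | 0 => Eq
  | n+1 => fun a c => ∃ b, chainT r n a b ∧ r b c

private lemma reflTransGen_iff_chainT {r : α → α → Prop} {a b : α} :
    Relation.ReflTransGen r a b ↔ ∃ n, chainT r n a b := by
  constructor
  · intro h
    induction h with
    | refl => exact ⟨0, rfl⟩
    | tail _ hbc ih => obtain ⟨n, hn⟩ := ih; exact ⟨n+1, _, hn, hbc⟩
  · rintro ⟨n, hn⟩
    induction n generalizing b with
    | zero => cases hn; rfl
    | succ n ih => obtain ⟨c, h1, h2⟩ := hn; exact (ih h1).tail h2

private lemma tree_bound {V E : Type*} [Finite V] [Finite E]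
    (s t : E → V) (x₀ : V)
    (h : ∀ u, Relation.ReflTransGen
      (fun a b => ∃ e, (s e = a ∧ t e = b) ∨ (s e = b ∧ t e = a)) x₀ u) :
    Nat.card V ≤ Nat.card E + 1 := by
  classical
  set r := fun a b => ∃ e, (s e = a ∧ t e = b) ∨ (s e = b ∧ t e = a) with hr
  have hex : ∀ u, ∃ n, chainT r n x₀ u := fun u => reflTransGen_iff_chainT.mp (h u)
  set d : V → ℕ := fun u => Nat.find (hex u) with hd
  have key : ∀ u, u ≠ x₀ →
      ∃ e, ((s e = u ∧ d (t e) < d u) ∨ (t e = u ∧ d (s e) < d u)) := by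
    intro u hu
    have hspec : chainT r (d u) x₀ u := Nat.find_spec (hex u)
    rcases hdu : d u with _ | n
    · rw [hdu] at hspec; exact absurd hspec.symm hu
    · rw [hdu] at hspec
      obtain ⟨w, hw, e, hcase⟩ := hspec
      have hdw : d w ≤ n := Nat.find_le hw
      rcases hcase with ⟨h1, h2⟩ | ⟨h1, h2⟩
      · exact ⟨e, Or.inr ⟨h2, by rw [h1]; omega⟩⟩
      · exact ⟨e, Or.inl ⟨h1, by rw [h2]; omega⟩⟩
  have : ∃ f : {u : V // u ≠ x₀} → E, Function.Injective f := by
    refine ⟨fun u => Classical.choose (key u.1 u.2), ?_⟩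
    rintro ⟨u, hu⟩ ⟨u', hu'⟩ hf
    have h1 := Classical.choose_spec (key u hu)
    have h2 := Classical.choose_spec (key u' hu')
    simp only [hf] at h1
    by_contra hne
    have hne' : u ≠ u' := fun h => hne (Subtype.ext h)
    rcases h1 with ⟨e1, e2⟩ | ⟨e1, e2⟩ <;> rcases h2 with ⟨f1, f2⟩ | ⟨f1, f2⟩
    · exact hne' (e1.symm.trans f1)
    · rw [e1] at f2; rw [f1] at e2; omega
    · rw [e1] at f2; rw [f1] at e2; omega
    · exact hne' (e1.symm.trans f1)
  obtain ⟨f, hf⟩ := this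
  have hle := Nat.card_le_card_of_injective f hf
  have hcard : Nat.card {u : V // u ≠ x₀} = Nat.card V - 1 := by
    have := Fintype.ofFinite V
    simp only [Nat.card_eq_fintype_card]
    rw [Fintype.card_subtype_compl (p := fun u => u = x₀), Fintype.card_subtype_eq]
  have hne : Nonempty V := ⟨x₀⟩
  have hpos : 0 < Nat.card V := Nat.card_pos
  omega

private lemma two_to_one_card {A B : Type*} [Finite A] (f : A → B) (ι : A → A)
    (hι : ∀ a, ι a ≠ a) (hfι : ∀ a, f (ι a) = f a)
    (hfib : ∀ a b, f a = f b → b = a ∨ b = ι a) (hsurj : Function.Surjective f) :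
    Nat.card A = 2 * Nat.card B := by
  classical
  have hB : Finite B := Finite.of_surjective f hsurj
  set l : B → A := Function.surjInv hsurj with hl
  have hfl : ∀ b, f (l b) = b := Function.surjInv_eq hsurj
  set g : B × Bool → A := fun p => if p.2 then l p.1 else ι (l p.1) with hg
  have hbij : Function.Bijective g := by
    constructor
    · rintro ⟨b, c⟩ ⟨b', c'⟩ hgg
      have hb : b = b' := by
        have := congrArg f hgg
        cases c <;> cases c' <;> simpa [hg, hfι, hfl] using this
      subst hb
      rcases c with _ | _ <;> rcases c' with _ | _
      · rfl
      · exact absurd (by simpa [hg] using hgg) (hι (l b))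
      · exact absurd (by simpa [hg] using hgg.symm) (hι (l b))
      · rfl
    · intro a
      rcases hfib (l (f a)) a (by rw [hfl]) with h | h
      · exact ⟨(f a, true), by simp [hg, h.symm]⟩
      · exact ⟨(f a, false), by simp [hg, h.symm]⟩
  calc Nat.card A = Nat.card (B × Bool) := (Nat.card_eq_of_bijective g hbij).symm
    _ = 2 * Nat.card B := by simp [Nat.card_prod, Nat.card_eq_fintype_card, mul_comm]

end Aux

private lemma comp_ineq (Gt G : FinGraph) (c : FreeDoubleCover Gt G) (S : Finset G.E)
    (hrel : ∀ x y : Gt.V, G.ReachAvoid S (c.vMap x) (c.vMap y) →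
      Relation.ReflTransGen
        (fun a b => ∃ e : Gt.E, c.eMap e ∉ S ∧
          ((Gt.s e = a ∧ Gt.t e = b) ∨ (Gt.s e = b ∧ Gt.t e = a))) x y)
    (v : G.V) :
    Nat.card {u : G.V // G.ReachAvoid S v u} ≤
      Nat.card {e : G.E // e ∉ S ∧ G.ReachAvoid S v (G.s e)} := by
  classical
  obtain ⟨x₀, hx₀⟩ := c.vMap_surj v
  set rt : Gt.V → Gt.V → Prop := fun a b => ∃ e : Gt.E, c.eMap e ∉ S ∧
    ((Gt.s e = a ∧ Gt.t e = b) ∨ (Gt.s e = b ∧ Gt.t e = a)) with hrt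
  have proj : ∀ {x y : Gt.V}, Relation.ReflTransGen rt x y →
      G.ReachAvoid S (c.vMap x) (c.vMap y) := by
    intro x y h
    induction h with
    | refl => exact .refl
    | tail _ hbc ih =>
        obtain ⟨e, he, hc⟩ := hbc
        refine ih.tail ⟨c.eMap e, he, ?_⟩
        rcases hc with ⟨h1, h2⟩ | ⟨h1, h2⟩
        · exact Or.inl ⟨by rw [← c.s_comm, h1], by rw [← c.t_comm, h2]⟩
        · exact Or.inr ⟨by rw [← c.s_comm, h1], by rw [← c.t_comm, h2]⟩
  set R : Gt.V → Prop := fun x => Relation.ReflTransGen rt x₀ x with hR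
  have memR : ∀ x : Gt.V, G.ReachAvoid S v (c.vMap x) → R x := by
    intro x hx
    exact hrel x₀ x (by rw [hx₀]; exact hx)
  have projR : ∀ x : Gt.V, R x → G.ReachAvoid S v (c.vMap x) := by
    intro x hx
    rw [← hx₀]; exact proj hx
  -- vertex double counting
  have hVcard : Nat.card {x : Gt.V // R x} = 2 * Nat.card {u : G.V // G.ReachAvoid S v u} := by
    refine two_to_one_card
      (fun x => (⟨c.vMap x.1, projR x.1 x.2⟩ : {u : G.V // G.ReachAvoid S v u}))
      (fun x => ⟨c.invV x.1, memR _ (by rw [c.vMap_invV]; exact projR x.1 x.2)⟩)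
      ?_ ?_ ?_ ?_
    · intro a h
      exact c.invV_ne a.1 (congrArg Subtype.val h)
    · intro a
      exact Subtype.ext (c.vMap_invV a.1)
    · intro a b h
      rcases c.fiberV a.1 b.1 (congrArg Subtype.val h) with h' | h'
      · exact Or.inl (Subtype.ext h')
      · exact Or.inr (Subtype.ext h')
    · rintro ⟨u, hu⟩
      obtain ⟨x, hx⟩ := c.vMap_surj u
      exact ⟨⟨x, memR x (by rw [hx]; exact hu)⟩, Subtype.ext hx⟩
  -- edge double counting
  have hEcard : Nat.card {e : Gt.E // c.eMap e ∉ S ∧ R (Gt.s e)} =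
      2 * Nat.card {e : G.E // e ∉ S ∧ G.ReachAvoid S v (G.s e)} := by
    refine two_to_one_card
      (fun e => (⟨c.eMap e.1, e.2.1, by rw [← c.s_comm]; exact projR _ e.2.2⟩ :
        {e : G.E // e ∉ S ∧ G.ReachAvoid S v (G.s e)}))
      (fun e => ⟨c.invE e.1, by rw [c.eMap_invE]; exact e.2.1,
        by rw [c.s_invE]; exact memR _ (by rw [c.vMap_invV]; exact projR _ e.2.2)⟩)
      ?_ ?_ ?_ ?_
    · intro a h
      exact c.invE_ne a.1 (congrArg Subtype.val h)
    · intro a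
      exact Subtype.ext (c.eMap_invE a.1)
    · intro a b h
      rcases c.fiberE a.1 b.1 (congrArg Subtype.val h) with h' | h'
      · exact Or.inl (Subtype.ext h')
      · exact Or.inr (Subtype.ext h')
    · rintro ⟨e, he1, he2⟩
      obtain ⟨et, het⟩ := c.eMap_surj e
      refine ⟨⟨et, by rw [het]; exact he1,
        memR _ (by rw [c.s_comm, het]; exact he2)⟩, Subtype.ext het⟩
  -- tree bound on the cover component
  have hconn : ∀ u : {x : Gt.V // R x},
      Relation.ReflTransGen
        (fun a b => ∃ e : {e : Gt.E // c.eMap e ∉ S ∧ R (Gt.s e)},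
          (((⟨Gt.s e.1, e.2.2⟩ : {x : Gt.V // R x}) = a ∧
            (⟨Gt.t e.1, e.2.2.tail ⟨e.1, e.2.1, Or.inl ⟨rfl, rfl⟩⟩⟩ : {x : Gt.V // R x}) = b) ∨
           ((⟨Gt.s e.1, e.2.2⟩ : {x : Gt.V // R x}) = b ∧
            (⟨Gt.t e.1, e.2.2.tail ⟨e.1, e.2.1, Or.inl ⟨rfl, rfl⟩⟩⟩ : {x : Gt.V // R x}) = a)))
        ⟨x₀, Relation.ReflTransGen.refl⟩ u := by
    rintro ⟨x, hx⟩
    induction hx with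
    | refl => exact .refl
    | @tail b cc hab hbc ih =>
        obtain ⟨e, he, hc⟩ := hbc
        rcases hc with ⟨h1, h2⟩ | ⟨h1, h2⟩
        · refine ih.tail ⟨⟨e, he, by rw [h1]; exact hab⟩, Or.inl ⟨Subtype.ext h1, Subtype.ext h2⟩⟩
        · refine ih.tail ⟨⟨e, he, by rw [h1]; exact hab.tail ⟨e, he, Or.inr ⟨h1, h2⟩⟩⟩,
            Or.inr ⟨Subtype.ext h1, Subtype.ext h2⟩⟩
  have htree := tree_bound
    (fun e : {e : Gt.E // c.eMap e ∉ S ∧ R (Gt.s e)} =>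
      (⟨Gt.s e.1, e.2.2⟩ : {x : Gt.V // R x}))
    (fun e => ⟨Gt.t e.1, e.2.2.tail ⟨e.1, e.2.1, Or.inl ⟨rfl, rfl⟩⟩⟩)
    ⟨x₀, Relation.ReflTransGen.refl⟩ hconn
  omega

/-- Let `π : G̃ → G` be a free double cover and remove the edges
of `S` from `G` so that the complement `Γ'` is relatively connected (the
preimage of each connected component of `Γ'` is connected).  Then
`|S| ≤ g - 1`, and every connected component of `Γ'` has genus `1` iff
`|S| = g - 1`. -/
theorem relatively_connected_bound (Gt G : FinGraph) (c : FreeDoubleCover Gt G)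
    (hG : G.Connected) (hGt : Gt.Connected) (S : Finset G.E)
    (g : ℤ) (hg : g = (Fintype.card G.E : ℤ) - (Fintype.card G.V : ℤ) + 1)
    (hrel : ∀ x y : Gt.V, G.ReachAvoid S (c.vMap x) (c.vMap y) →
      Relation.ReflTransGen
        (fun a b => ∃ e : Gt.E, c.eMap e ∉ S ∧
          ((Gt.s e = a ∧ Gt.t e = b) ∨ (Gt.s e = b ∧ Gt.t e = a))) x y) :
    (S.card : ℤ) ≤ g - 1 ∧
    ((∀ v : G.V,
        (Nat.card {e : G.E // e ∉ S ∧ G.ReachAvoid S v (G.s e)} : ℤ) -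
          (Nat.card {u : G.V // G.ReachAvoid S v u} : ℤ) + 1 = 1) ↔
      (S.card : ℤ) = g - 1) := by
  classical
  have symmR : Symmetric (G.ReachAvoid S) := by
    intro a b h
    unfold FinGraph.ReachAvoid at h ⊢
    induction h with
    | refl => exact .refl
    | tail _ hbc ih =>
        obtain ⟨e, he, h⟩ := hbc
        exact Relation.ReflTransGen.head ⟨e, he, h.symm⟩ ih
  set st : Setoid G.V :=
    ⟨G.ReachAvoid S, ⟨fun _ => .refl, fun h => symmR h, fun h1 h2 => h1.trans h2⟩⟩ with hst
  haveI : Fintype (Quotient st) := Fintype.ofFinite _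
  set nv : G.V → ℕ := fun v => Nat.card {u : G.V // G.ReachAvoid S v u} with hnv
  set ne' : G.V → ℕ := fun v => Nat.card {e : G.E // e ∉ S ∧ G.ReachAvoid S v (G.s e)} with hne'
  have hkey : ∀ v, nv v ≤ ne' v := fun v => comp_ineq Gt G c S hrel v
  have hiff : ∀ {v v' : G.V}, G.ReachAvoid S v v' →
      ∀ u, (G.ReachAvoid S v u ↔ G.ReachAvoid S v' u) :=
    fun h u => ⟨fun h2 => (symmR h).trans h2, fun h2 => h.trans h2⟩
  have hnv_inv : ∀ {v v'}, G.ReachAvoid S v v' → nv v = nv v' := by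
    intro v v' h
    exact Nat.card_congr (Equiv.subtypeEquivRight (hiff h))
  have hne_inv : ∀ {v v'}, G.ReachAvoid S v v' → ne' v = ne' v' := by
    intro v v' h
    exact Nat.card_congr
      (Equiv.subtypeEquivRight (fun e => and_congr_right fun _ => hiff h _))
  have hnvf : ∀ v, nv v = (Finset.univ.filter fun u => G.ReachAvoid S v u).card := by
    intro v
    simp only [hnv]
    rw [Nat.card_eq_fintype_card, Fintype.card_subtype]
  have hnef : ∀ v, ne' v =
      (Finset.univ.filter fun e => e ∉ S ∧ G.ReachAvoid S v (G.s e)).card := by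
    intro v
    simp only [hne']
    rw [Nat.card_eq_fintype_card, Fintype.card_subtype]
  have hout : ∀ (q : Quotient st) (u : G.V), (⟦u⟧ = q) ↔ G.ReachAvoid S q.out u := by
    intro q u
    conv_lhs => rw [← Quotient.out_eq q]
    rw [Quotient.eq]
    exact ⟨fun h => symmR h, fun h => symmR h⟩
  have hsumV : Fintype.card G.V = ∑ q : Quotient st, nv q.out := by
    rw [← Finset.card_univ]
    rw [Finset.card_eq_sum_card_fiberwise
      (f := fun v => (⟦v⟧ : Quotient st)) (t := Finset.univ) (fun x _ => Finset.mem_univ _)]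
    refine Finset.sum_congr rfl fun q _ => ?_
    rw [hnvf]
    congr 1
    exact Finset.filter_congr fun u _ => by simpa using hout q u
  have hsumE : (Finset.univ.filter fun e : G.E => e ∉ S).card =
      ∑ q : Quotient st, ne' q.out := by
    rw [Finset.card_eq_sum_card_fiberwise
      (f := fun e => (⟦G.s e⟧ : Quotient st)) (t := Finset.univ) (fun x _ => Finset.mem_univ _)]
    refine Finset.sum_congr rfl fun q _ => ?_
    rw [hnef]
    rw [Finset.filter_filter]
    congr 1
    refine Finset.filter_congr fun e _ => ?_
    constructor
    · rintro ⟨h1, h2⟩; exact ⟨h1, (hout q (G.s e)).mp h2⟩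
    · rintro ⟨h1, h2⟩; exact ⟨h1, (hout q (G.s e)).mpr h2⟩
  have hfilter : (Finset.univ.filter fun e : G.E => e ∉ S).card =
      Fintype.card G.E - S.card := by
    have h1 : (Finset.univ.filter fun e : G.E => e ∉ S) = Sᶜ := by
      ext e; simp
    rw [h1, Finset.card_compl]
  have hSle : S.card ≤ Fintype.card G.E := Finset.card_le_univ S
  have hsum_le : ∑ q : Quotient st, nv q.out ≤ ∑ q : Quotient st, ne' q.out :=
    Finset.sum_le_sum fun q _ => hkey _
  subst hg
  refine ⟨by omega, ?_, ?_⟩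
  · intro hAll
    have hpt : ∀ v, ne' v = nv v := by
      intro v; have := hAll v
      have e1 : Nat.card {u : G.V // G.ReachAvoid S v u} = nv v := rfl
      have e2 : Nat.card {e : G.E // e ∉ S ∧ G.ReachAvoid S v (G.s e)} = ne' v := rfl
      omega
    have hse : ∑ q : Quotient st, nv q.out = ∑ q : Quotient st, ne' q.out :=
      Finset.sum_congr rfl fun q _ => (hpt _).symm
    omega
  · intro hEq
    have hsum_eq : ∑ q : Quotient st, nv q.out = ∑ q : Quotient st, ne' q.out := by omega
    have hpt := (Finset.sum_eq_sum_iff_of_le (fun q _ => hkey q.out)).mp hsum_eq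
    intro v
    have hv : G.ReachAvoid S v (Quotient.mk st v).out := symmR (Quotient.mk_out v)
    have h1 : nv v = nv (Quotient.mk st v).out := hnv_inv hv
    have h2 : ne' v = ne' (Quotient.mk st v).out := hne_inv hv
    have h3 := hpt (Quotient.mk st v) (Finset.mem_univ _)
    have e1 : Nat.card {u : G.V // G.ReachAvoid S v u} = nv v := rfl
    have e2 : Nat.card {e : G.E // e ∉ S ∧ G.ReachAvoid S v (G.s e)} = ne' v := rfl
    omega
end
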